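/- arXiv:1309.7421 — 8 statements merged into one kernel-verified Lean document; each statement's English description precedes it below -/
import Mathlib

section
/- Weak maximum principle (Lemma 2.2): Let u be admissible and satisfy 𝓛u(x,t) ≤ 0 for every (x,t) ∈ [0,l] × (0,T]. If u attains a positive maximum over Q̄, i.e. there is a point (x₀,t₀) ∈ Q̄ with u(x₀,t₀) = max_{Q̄} u > 0, then necessarily t₀ = 0. In particular, u cannot attain a positive maximum at any interior point nor at the degenerate lateral boundaries {x = 0, 0 < t ≤ T} and {x = l, 0 < t ≤ T}. -/
open Set Filter Topology

lemma slope_deriv_nonneg {f : ℝ → ℝ} {f' b : ℝ} {s t : Set ℝ}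
    (h : HasDerivWithinAt f f' s b) (hts : t ⊆ s \ {b})
    (hne : (𝓝[t] b).NeBot) (hsl : ∀ x ∈ t, 0 ≤ slope f b x) : 0 ≤ f' := by
  have h2 : Tendsto (slope f b) (𝓝[t] b) (𝓝 f') :=
    (hasDerivWithinAt_iff_tendsto_slope.mp h).mono_left (nhdsWithin_mono b hts)
  exact ge_of_tendsto h2 (eventually_nhdsWithin_of_forall hsl)

lemma slope_deriv_nonpos {f : ℝ → ℝ} {f' b : ℝ} {s t : Set ℝ}
    (h : HasDerivWithinAt f f' s b) (hts : t ⊆ s \ {b})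
    (hne : (𝓝[t] b).NeBot) (hsl : ∀ x ∈ t, slope f b x ≤ 0) : f' ≤ 0 := by
  have h2 : Tendsto (slope f b) (𝓝[t] b) (𝓝 f') :=
    (hasDerivWithinAt_iff_tendsto_slope.mp h).mono_left (nhdsWithin_mono b hts)
  exact le_of_tendsto h2 (eventually_nhdsWithin_of_forall hsl)


/-- Weak maximum principle (Lemma 2.2): if `𝓛u ≤ 0` on `[0,l] × (0,T]` and the admissible
function `u` attains a positive maximum over `Q̄ = [0,l] × [0,T]` at `(x₀, t₀)`,
then `t₀ = 0`. -/
theorem weak_maximum_principle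
    (l T q₀ : ℝ) (hl : 0 < l) (hT : 0 < T) (hq₀ : 0 < q₀)
    (a a' q : ℝ → ℝ)
    (ha : ∀ x ∈ Icc (0:ℝ) l, HasDerivWithinAt a (a' x) (Icc (0:ℝ) l) x)
    (ha'c : ContinuousOn a' (Icc (0:ℝ) l))
    (ha0 : a 0 = 0) (hal : a l = 0)
    (hapos : ∀ x ∈ Ioo (0:ℝ) l, 0 < a x)
    (hqc : ContinuousOn q (Icc (0:ℝ) l))
    (hq : ∀ x ∈ Icc (0:ℝ) l, q₀ ≤ q x)
    (u ut ux uxx : ℝ → ℝ → ℝ)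
    (hu : ContinuousOn (fun p : ℝ × ℝ => u p.1 p.2) (Icc (0:ℝ) l ×ˢ Icc (0:ℝ) T))
    (hut : ∀ x ∈ Icc (0:ℝ) l, ∀ t ∈ Ioc (0:ℝ) T,
      HasDerivWithinAt (fun τ => u x τ) (ut x t) (Icc (0:ℝ) T) t)
    (hux : ∀ x ∈ Icc (0:ℝ) l, ∀ t ∈ Ioc (0:ℝ) T,
      HasDerivWithinAt (fun s => u s t) (ux x t) (Icc (0:ℝ) l) x)
    (huxx : ∀ x ∈ Icc (0:ℝ) l, ∀ t ∈ Ioc (0:ℝ) T,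
      HasDerivWithinAt (fun s => ux s t) (uxx x t) (Icc (0:ℝ) l) x)
    (hL : ∀ x ∈ Icc (0:ℝ) l, ∀ t ∈ Ioc (0:ℝ) T,
      ut x t - (a x * uxx x t + a' x * ux x t) + q x * u x t ≤ 0)
    (x₀ t₀ : ℝ) (hx₀ : x₀ ∈ Icc (0:ℝ) l) (ht₀ : t₀ ∈ Icc (0:ℝ) T)
    (hpos : 0 < u x₀ t₀)
    (hmax : ∀ x ∈ Icc (0:ℝ) l, ∀ t ∈ Icc (0:ℝ) T, u x t ≤ u x₀ t₀) :
    t₀ = 0 := by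
  by_contra h0
  have ht0pos : 0 < t₀ := lt_of_le_of_ne ht₀.1 (Ne.symm h0)
  have htIoc : t₀ ∈ Ioc (0:ℝ) T := ⟨ht0pos, ht₀.2⟩
  set M := u x₀ t₀ with hM
  -- time derivative nonneg
  have hut0 : 0 ≤ ut x₀ t₀ := by
    apply slope_deriv_nonneg (hut x₀ hx₀ t₀ htIoc) (t := Ico 0 t₀)
    · intro τ hτ; exact ⟨⟨hτ.1, hτ.2.le.trans ht₀.2⟩, ne_of_lt hτ.2⟩
    · rw [nhdsWithin_Ico_eq_nhdsLT ht0pos]; infer_instance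
    · intro τ hτ
      rw [slope_def_field]
      refine div_nonneg_iff.mpr (Or.inr ⟨?_, ?_⟩)
      · have := hmax x₀ hx₀ τ ⟨hτ.1, hτ.2.le.trans ht₀.2⟩; linarith
      · linarith [hτ.2]
  -- nonnegativity of a on Icc
  have hanneg : ∀ x ∈ Icc (0:ℝ) l, 0 ≤ a x := by
    intro x hx
    rcases eq_or_lt_of_le hx.1 with h | h
    · rw [← h, ha0]
    rcases eq_or_lt_of_le hx.2 with h' | h'
    · rw [h', hal]
    exact (hapos x ⟨h, h'⟩).le
  -- spatial term nonpos
  have key : a x₀ * uxx x₀ t₀ + a' x₀ * ux x₀ t₀ ≤ 0 := by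
    rcases eq_or_lt_of_le hx₀.1 with h0x | h0x
    · -- x₀ = 0
      have hxeq : x₀ = 0 := h0x.symm
      have hsub : Ioc (0:ℝ) l ⊆ Icc 0 l \ {x₀} := by
        intro x hx; exact ⟨⟨hx.1.le, hx.2⟩, by rw [hxeq]; exact ne_of_gt hx.1⟩
      have hne : (𝓝[Ioc (0:ℝ) l] x₀).NeBot := by
        rw [hxeq, nhdsWithin_Ioc_eq_nhdsGT hl]; infer_instance
      have hux0 : ux x₀ t₀ ≤ 0 := by
        apply slope_deriv_nonpos (hux x₀ hx₀ t₀ htIoc) hsub hne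
        intro x hx
        rw [slope_def_field]
        apply div_nonpos_of_nonpos_of_nonneg
        · have := hmax x ⟨hx.1.le, hx.2⟩ t₀ ht₀; linarith
        · rw [hxeq]; linarith [hx.1]
      have ha'0 : 0 ≤ a' x₀ := by
        apply slope_deriv_nonneg (ha x₀ hx₀) hsub hne
        intro x hx
        rw [slope_def_field]
        apply div_nonneg
        · have := hanneg x ⟨hx.1.le, hx.2⟩; rw [hxeq, ha0]; linarith
        · rw [hxeq]; linarith [hx.1]
      rw [hxeq] at hux0 ha'0
      rw [hxeq, ha0]
      nlinarith
    rcases eq_or_lt_of_le hx₀.2 with hxl | hxl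
    · -- x₀ = l
      have hsub : Ico (0:ℝ) l ⊆ Icc 0 l \ {x₀} := by
        intro x hx; exact ⟨⟨hx.1, hx.2.le⟩, by rw [hxl]; exact ne_of_lt hx.2⟩
      have hne : (𝓝[Ico (0:ℝ) l] x₀).NeBot := by
        rw [hxl, nhdsWithin_Ico_eq_nhdsLT hl]; infer_instance
      have hux0 : 0 ≤ ux x₀ t₀ := by
        apply slope_deriv_nonneg (hux x₀ hx₀ t₀ htIoc) hsub hne
        intro x hx
        rw [slope_def_field]
        refine div_nonneg_iff.mpr (Or.inr ⟨?_, ?_⟩)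
        · have := hmax x ⟨hx.1, hx.2.le⟩ t₀ ht₀; linarith
        · rw [hxl]; linarith [hx.2]
      have ha'0 : a' x₀ ≤ 0 := by
        apply slope_deriv_nonpos (ha x₀ hx₀) hsub hne
        intro x hx
        rw [slope_def_field]
        apply div_nonpos_of_nonneg_of_nonpos
        · have := hanneg x ⟨hx.1, hx.2.le⟩; rw [hxl, hal]; linarith
        · rw [hxl]; linarith [hx.2]
      rw [hxl] at hux0 ha'0
      rw [hxl, hal]
      nlinarith
    · -- interior
      have hxInt : x₀ ∈ Ioo (0:ℝ) l := ⟨h0x, hxl⟩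
      have hsubR : Ioc x₀ l ⊆ Icc 0 l \ {x₀} := by
        intro x hx; exact ⟨⟨hx₀.1.trans hx.1.le, hx.2⟩, ne_of_gt hx.1⟩
      have hneR : (𝓝[Ioc x₀ l] x₀).NeBot := by
        rw [nhdsWithin_Ioc_eq_nhdsGT hxl]; infer_instance
      have hsubL : Ico 0 x₀ ⊆ Icc 0 l \ {x₀} := by
        intro x hx; exact ⟨⟨hx.1, hx.2.le.trans hx₀.2⟩, ne_of_lt hx.2⟩
      have hneL : (𝓝[Ico 0 x₀] x₀).NeBot := by
        rw [nhdsWithin_Ico_eq_nhdsLT h0x]; infer_instance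
      have hux1 : ux x₀ t₀ ≤ 0 := by
        apply slope_deriv_nonpos (hux x₀ hx₀ t₀ htIoc) hsubR hneR
        intro x hx
        rw [slope_def_field]
        apply div_nonpos_of_nonpos_of_nonneg
        · have := hmax x ⟨hx₀.1.trans hx.1.le, hx.2⟩ t₀ ht₀; linarith
        · linarith [hx.1]
      have hux2 : 0 ≤ ux x₀ t₀ := by
        apply slope_deriv_nonneg (hux x₀ hx₀ t₀ htIoc) hsubL hneL
        intro x hx
        rw [slope_def_field]
        refine div_nonneg_iff.mpr (Or.inr ⟨?_, ?_⟩)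
        · have := hmax x ⟨hx.1, hx.2.le.trans hx₀.2⟩ t₀ ht₀; linarith
        · linarith [hx.2]
      have hux0 : ux x₀ t₀ = 0 := le_antisymm hux1 hux2
      -- second derivative nonpos
      have huxx0 : uxx x₀ t₀ ≤ 0 := by
        by_contra hc
        push_neg at hc
        have hg := huxx x₀ hx₀ t₀ htIoc
        have hten : Tendsto (slope (fun s => ux s t₀) x₀) (𝓝[Ioo x₀ l] x₀) (𝓝 (uxx x₀ t₀)) :=
          (hasDerivWithinAt_iff_tendsto_slope.mp hg).mono_left
            (nhdsWithin_mono x₀ (fun x hx => ⟨⟨hx₀.1.trans hx.1.le, hx.2.le⟩, ne_of_gt hx.1⟩))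
        have hev : ∀ᶠ x in 𝓝[Ioo x₀ l] x₀, 0 < slope (fun s => ux s t₀) x₀ x :=
          hten.eventually (eventually_gt_nhds hc)
        rw [eventually_nhdsWithin_iff, Metric.eventually_nhds_iff] at hev
        obtain ⟨ε, hε, hevs⟩ := hev
        set y := min (x₀ + ε / 2) ((x₀ + l) / 2) with hy
        have hyx : x₀ < y := by
          apply lt_min <;> [linarith; linarith [hxInt.2]]
        have hyl : y < l := by
          have : y ≤ (x₀ + l) / 2 := min_le_right _ _
          linarith [hxInt.2]
        have hyε : y - x₀ < ε := by
          have : y ≤ x₀ + ε / 2 := min_le_left _ _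
          linarith
        -- positivity of ux on Ioo x₀ y
        have huxpos : ∀ s ∈ Ioo x₀ y, 0 < ux s t₀ := by
          intro s hs
          have hdist : dist s x₀ < ε := by
            rw [Real.dist_eq, abs_of_pos (by linarith [hs.1])]
            linarith [hs.2]
          have hsl := hevs hdist ⟨hs.1, hs.2.trans hyl⟩
          rw [slope_def_field, hux0, sub_zero] at hsl
          have := mul_pos hsl (by linarith [hs.1] : (0:ℝ) < s - x₀)
          rwa [div_mul_cancel₀] at this
          linarith [hs.1]
        -- u strictly increasing on [x₀, y]
        have hcont : ContinuousOn (fun s => u s t₀) (Icc x₀ y) := by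
          intro s hs
          have hs' : s ∈ Icc (0:ℝ) l := ⟨hx₀.1.trans hs.1, hs.2.trans hyl.le⟩
          exact ((hux s hs' t₀ htIoc).continuousWithinAt).mono
            (fun z hz => ⟨hx₀.1.trans hz.1, hz.2.trans hyl.le⟩)
        have hmono : StrictMonoOn (fun s => u s t₀) (Icc x₀ y) := by
          apply strictMonoOn_of_deriv_pos (convex_Icc _ _) hcont
          intro s hs
          rw [interior_Icc] at hs
          have hs' : s ∈ Icc (0:ℝ) l := ⟨(hx₀.1.trans hs.1.le), (hs.2.trans hyl).le⟩
          have hdA : HasDerivAt (fun z => u z t₀) (ux s t₀) s :=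
            (hux s hs' t₀ htIoc).hasDerivAt
              (Icc_mem_nhds (lt_of_le_of_lt hx₀.1 hs.1) (hs.2.trans hyl))
          rw [hdA.deriv]
          exact huxpos s hs
        have hlt : u x₀ t₀ < u y t₀ :=
          hmono (left_mem_Icc.mpr hyx.le) (right_mem_Icc.mpr hyx.le) hyx
        have hle := hmax y ⟨hx₀.1.trans hyx.le, hyl.le⟩ t₀ ht₀
        linarith
      have haq : 0 < a x₀ := hapos x₀ hxInt
      rw [hux0]
      nlinarith
  -- conclude
  have hLp := hL x₀ hx₀ t₀ htIoc
  have hqx := hq x₀ hx₀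
  nlinarith [mul_le_mul_of_nonneg_right hqx hpos.le]
end

section
/- Degenerate boundary step in the proof of the weak maximum principle: Let u be admissible and suppose u attains a positive maximum M = max_{Q̄} u > 0 at a point (0,t₁) with 0 < t₁ ≤ T on the degenerate boundary x = 0. Then a'(0) ≥ 0, the one-sided derivative u_x(0,t₁) = lim_{x→0⁺}(u(x,t₁) − u(0,t₁))/x satisfies u_x(0,t₁) ≤ 0, u_t(0,t₁) ≥ 0, and consequently 𝓛u(0,t₁) = u_t(0,t₁) − a(0)u_{xx}(0,t₁) − a'(0)u_x(0,t₁) + q(0)M ≥ q(0)M ≥ q₀M > 0. -/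
open Set Topology Filter

/-- At a left endpoint which is a maximum point, the one-sided derivative is ≤ 0. -/
lemma left_endpoint_max_deriv_nonpos {f : ℝ → ℝ} {f' b : ℝ} (hb : 0 < b)
    (h : HasDerivWithinAt f f' (Icc 0 b) 0)
    (hmax : ∀ x ∈ Icc (0:ℝ) b, f x ≤ f 0) : f' ≤ 0 := by
  rw [hasDerivWithinAt_iff_tendsto_slope] at h
  have hne : (𝓝[Icc (0:ℝ) b \ {0}] 0).NeBot := by
    rw [← mem_closure_iff_nhdsWithin_neBot]
    have : Ioc (0:ℝ) b ⊆ Icc 0 b \ {0} := fun x hx =>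
      ⟨⟨hx.1.le, hx.2⟩, ne_of_gt hx.1⟩
    refine closure_mono this ?_
    rw [closure_Ioc hb.ne]
    exact ⟨le_rfl, hb.le⟩
  refine le_of_tendsto h ?_
  filter_upwards [self_mem_nhdsWithin] with x hx
  rcases hx with ⟨⟨hx0, hxb⟩, hxne⟩
  have hx0' : 0 < x := lt_of_le_of_ne hx0 (Ne.symm (by simpa using hxne))
  have : f x - f 0 ≤ 0 := sub_nonpos.mpr (hmax x ⟨hx0, hxb⟩)
  simp only [slope_def_field, div_eq_mul_inv]
  have : (f x - f 0) / (x - 0) ≤ 0 := by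
    apply div_nonpos_of_nonpos_of_nonneg this (by linarith)
  simpa [slope_def_field, div_eq_mul_inv] using this

/-- At a right endpoint which is a maximum point, the one-sided derivative is ≥ 0. -/
lemma right_endpoint_max_deriv_nonneg {f : ℝ → ℝ} {f' b : ℝ} (hb : 0 < b)
    (h : HasDerivWithinAt f f' (Icc 0 b) b)
    (hmax : ∀ x ∈ Icc (0:ℝ) b, f x ≤ f b) : 0 ≤ f' := by
  rw [hasDerivWithinAt_iff_tendsto_slope] at h
  have hne : (𝓝[Icc (0:ℝ) b \ {b}] b).NeBot := by
    rw [← mem_closure_iff_nhdsWithin_neBot]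
    have : Ico (0:ℝ) b ⊆ Icc 0 b \ {b} := fun x hx =>
      ⟨⟨hx.1, hx.2.le⟩, ne_of_lt hx.2⟩
    refine closure_mono this ?_
    rw [closure_Ico hb.ne]
    exact ⟨hb.le, le_rfl⟩
  refine ge_of_tendsto h ?_
  filter_upwards [self_mem_nhdsWithin] with x hx
  rcases hx with ⟨⟨hx0, hxb⟩, hxne⟩
  have hxb' : x < b := lt_of_le_of_ne hxb (by simpa using hxne)
  have h1 : f x - f b ≤ 0 := sub_nonpos.mpr (hmax x ⟨hx0, hxb⟩)
  have : 0 ≤ (f x - f b) / (x - b) :=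
    div_nonneg_of_nonpos h1 (by linarith)
  simpa [slope_def_field] using this


/-- Degenerate boundary step in the proof of the weak maximum principle: at a positive
maximum point `(0, t₁)` on the degenerate boundary `x = 0` one has `a'(0) ≥ 0`,
`uₓ(0,t₁) ≤ 0`, `u_t(0,t₁) ≥ 0`, and `𝓛u(0,t₁) ≥ q(0)M ≥ q₀M > 0`. -/
theorem boundary_step_weak_maximum_principle
    (l T q₀ : ℝ) (hl : 0 < l) (hT : 0 < T) (hq₀ : 0 < q₀)
    (a a' q : ℝ → ℝ)
    (ha : ∀ x ∈ Icc (0:ℝ) l, HasDerivWithinAt a (a' x) (Icc (0:ℝ) l) x)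
    (ha'c : ContinuousOn a' (Icc (0:ℝ) l))
    (ha0 : a 0 = 0) (hal : a l = 0)
    (hapos : ∀ x ∈ Ioo (0:ℝ) l, 0 < a x)
    (hqc : ContinuousOn q (Icc (0:ℝ) l))
    (hq : ∀ x ∈ Icc (0:ℝ) l, q₀ ≤ q x)
    (u ut ux uxx : ℝ → ℝ → ℝ)
    (hu : ContinuousOn (fun p : ℝ × ℝ => u p.1 p.2) (Icc (0:ℝ) l ×ˢ Icc (0:ℝ) T))
    (hut : ∀ x ∈ Icc (0:ℝ) l, ∀ t ∈ Ioc (0:ℝ) T,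
      HasDerivWithinAt (fun τ => u x τ) (ut x t) (Icc (0:ℝ) T) t)
    (hux : ∀ x ∈ Icc (0:ℝ) l, ∀ t ∈ Ioc (0:ℝ) T,
      HasDerivWithinAt (fun s => u s t) (ux x t) (Icc (0:ℝ) l) x)
    (huxx : ∀ x ∈ Icc (0:ℝ) l, ∀ t ∈ Ioc (0:ℝ) T,
      HasDerivWithinAt (fun s => ux s t) (uxx x t) (Icc (0:ℝ) l) x)
    (t₁ M : ℝ) (ht₁ : t₁ ∈ Ioc (0:ℝ) T)
    (hM : u 0 t₁ = M) (hMpos : 0 < M)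
    (hmax : ∀ x ∈ Icc (0:ℝ) l, ∀ t ∈ Icc (0:ℝ) T, u x t ≤ M) :
    0 ≤ a' 0 ∧ ux 0 t₁ ≤ 0 ∧ 0 ≤ ut 0 t₁ ∧
    q 0 * M ≤ ut 0 t₁ - (a 0 * uxx 0 t₁ + a' 0 * ux 0 t₁) + q 0 * M ∧
    q₀ * M ≤ q 0 * M ∧ 0 < q₀ * M := by
  have h0l : (0:ℝ) ∈ Icc (0:ℝ) l := ⟨le_rfl, hl.le⟩
  -- a'(0) ≥ 0 : a has a minimum at 0
  have ha'0 : 0 ≤ a' 0 := by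
    have hmin : ∀ x ∈ Icc (0:ℝ) l, (fun s => -a s) x ≤ (fun s => -a s) 0 := by
      intro x hx
      simp only [ha0, neg_zero, neg_nonpos]
      rcases eq_or_lt_of_le hx.1 with h | h
      · simp [← h, ha0]
      rcases eq_or_lt_of_le hx.2 with h' | h'
      · simp [h', hal]
      · exact (hapos x ⟨h, h'⟩).le
    have := left_endpoint_max_deriv_nonpos hl ((ha 0 h0l).neg) hmin
    linarith
  -- ux(0,t₁) ≤ 0 : u(·,t₁) has a maximum at 0
  have hux0 : ux 0 t₁ ≤ 0 := by
    refine left_endpoint_max_deriv_nonpos hl (hux 0 h0l t₁ ht₁) ?_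
    intro x hx
    rw [hM]
    exact hmax x hx t₁ ⟨ht₁.1.le, ht₁.2⟩
  -- ut(0,t₁) ≥ 0 : t ↦ u(0,t) has a maximum at the right endpoint t₁ of [0,t₁]
  have hut0 : 0 ≤ ut 0 t₁ := by
    refine right_endpoint_max_deriv_nonneg ht₁.1
      ((hut 0 h0l t₁ ht₁).mono (Icc_subset_Icc le_rfl ht₁.2)) ?_
    intro t ht
    rw [hM]
    exact hmax 0 h0l t ⟨ht.1, ht.2.trans ht₁.2⟩
  have hq0 : q₀ ≤ q 0 := hq 0 h0l
  refine ⟨ha'0, hux0, hut0, ?_, ?_, mul_pos hq₀ hMpos⟩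
  · have : a' 0 * ux 0 t₁ ≤ 0 := mul_nonpos_of_nonneg_of_nonpos ha'0 hux0
    rw [ha0]
    nlinarith
  · exact mul_le_mul_of_nonneg_right hq0 hMpos.le
end

section
/- Weak minimum principle (Corollary 2.3): Let u be admissible and satisfy 𝓛u(x,t) ≥ 0 for every (x,t) ∈ [0,l] × (0,T]. If u attains a negative minimum over Q̄, i.e. there is a point (x₀,t₀) ∈ Q̄ with u(x₀,t₀) = min_{Q̄} u < 0, then necessarily t₀ = 0. -/
open Set Filter Topology

lemma min_left_deriv_nonneg {f : ℝ → ℝ} {f' a b : ℝ} (hab : a < b)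
    (hf : HasDerivWithinAt f f' (Icc a b) a)
    (hmin : ∀ x ∈ Icc a b, f a ≤ f x) : 0 ≤ f' := by
  have h := hasDerivWithinAt_iff_tendsto_slope.1 hf
  have hsub : Ioo a b ⊆ Icc a b \ {a} := fun x hx =>
    ⟨⟨le_of_lt hx.1, le_of_lt hx.2⟩, ne_of_gt hx.1⟩
  have hcl : a ∈ closure (Icc a b \ {a}) := by
    have : a ∈ closure (Ioo a b) := by
      rw [closure_Ioo hab.ne]; exact ⟨le_refl a, hab.le⟩
    exact closure_mono hsub this
  have hne : (𝓝[Icc a b \ {a}] a).NeBot := mem_closure_iff_nhdsWithin_neBot.1 hcl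
  refine ge_of_tendsto h ?_
  filter_upwards [self_mem_nhdsWithin] with x hx
  rcases hx with ⟨⟨hx1, hx2⟩, hx3⟩
  have hxa : a < x := lt_of_le_of_ne hx1 (Ne.symm hx3)
  rw [slope_def_field]
  exact div_nonneg (by linarith [hmin x ⟨hx1, hx2⟩]) (by linarith)

lemma min_right_deriv_nonpos {f : ℝ → ℝ} {f' a b : ℝ} (hab : a < b)
    (hf : HasDerivWithinAt f f' (Icc a b) b)
    (hmin : ∀ x ∈ Icc a b, f b ≤ f x) : f' ≤ 0 := by
  have h := hasDerivWithinAt_iff_tendsto_slope.1 hf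
  have hsub : Ioo a b ⊆ Icc a b \ {b} := fun x hx =>
    ⟨⟨le_of_lt hx.1, le_of_lt hx.2⟩, ne_of_lt hx.2⟩
  have hcl : b ∈ closure (Icc a b \ {b}) := by
    have : b ∈ closure (Ioo a b) := by
      rw [closure_Ioo hab.ne]; exact ⟨hab.le, le_refl b⟩
    exact closure_mono hsub this
  have hne : (𝓝[Icc a b \ {b}] b).NeBot := mem_closure_iff_nhdsWithin_neBot.1 hcl
  refine le_of_tendsto h ?_
  filter_upwards [self_mem_nhdsWithin] with x hx
  rcases hx with ⟨⟨hx1, hx2⟩, hx3⟩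
  have hxb : x < b := lt_of_le_of_ne hx2 hx3
  rw [slope_def_field]
  exact div_nonpos_of_nonneg_of_nonpos (by linarith [hmin x ⟨hx1, hx2⟩]) (by linarith)

/-- minimum attained at an interior-or-right point: one-sided derivative ≤ 0. -/
lemma min_deriv_nonpos_of_lt {f : ℝ → ℝ} {f' a b c : ℝ} (hac : a < c) (hcb : c ≤ b)
    (hf : HasDerivWithinAt f f' (Icc a b) c)
    (hmin : ∀ x ∈ Icc a b, f c ≤ f x) : f' ≤ 0 :=
  min_right_deriv_nonpos hac (hf.mono (Icc_subset_Icc_right hcb))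
    (fun x hx => hmin x ⟨hx.1, hx.2.trans hcb⟩)

/-- second derivative test at an interior minimum (one direction). -/
lemma second_deriv_nonneg_at_interior_min {f f1 : ℝ → ℝ} {f2 a b c : ℝ}
    (hac : a < c) (hcb : c < b)
    (hf1 : ∀ x ∈ Icc a b, HasDerivWithinAt f (f1 x) (Icc a b) x)
    (hf2 : HasDerivWithinAt f1 f2 (Icc a b) c)
    (hf1c : f1 c = 0)
    (hmin : ∀ x ∈ Icc a b, f c ≤ f x) : 0 ≤ f2 := by
  by_contra h2
  push_neg at h2
  have h := hasDerivWithinAt_iff_tendsto_slope.1 hf2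
  have ev : ∀ᶠ x in 𝓝[Icc a b \ {c}] c, slope f1 c x < 0 :=
    h.eventually (Iio_mem_nhds h2)
  rw [eventually_nhdsWithin_iff] at ev
  rcases mem_nhds_iff_exists_Ioo_subset.1 ev with ⟨lo, hi, hcmem, hIoo⟩
  set d := min ((c + hi) / 2) b with hd
  have hchi : c < hi := hcmem.2
  have hcd : c < d := lt_min (by linarith) hcb
  have hdb : d ≤ b := min_le_right _ _
  have hdhi : d < hi := lt_of_le_of_lt (min_le_left _ _) (by linarith)
  -- on (c, d), f1 < 0
  have hneg : ∀ ξ ∈ Ioo c d, f1 ξ < 0 := by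
    intro ξ hξ
    have hξab : ξ ∈ Icc a b := ⟨(hac.trans hξ.1).le, (hξ.2.trans_le hdb).le⟩
    have hsl : slope f1 c ξ < 0 := by
      refine hIoo ⟨hcmem.1.trans hξ.1, hξ.2.trans hdhi⟩ ⟨hξab, ne_of_gt hξ.1⟩
    rw [slope_def_field, hf1c] at hsl
    have hξc : 0 < ξ - c := by linarith [hξ.1]
    have := (div_neg_iff).1 hsl
    rcases this with ⟨h1, h2'⟩ | ⟨h1, h2'⟩
    · linarith
    · linarith
  -- mean value theorem on [c, d]
  have hcont : ContinuousOn f (Icc c d) := by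
    intro x hx
    have hxab : x ∈ Icc a b := ⟨hac.le.trans hx.1, hx.2.trans hdb⟩
    exact ((hf1 x hxab).continuousWithinAt).mono (Icc_subset_Icc hac.le hdb)
  have hderiv : ∀ x ∈ Ioo c d, HasDerivAt f (f1 x) x := by
    intro x hx
    have hxab : x ∈ Icc a b := ⟨(hac.trans hx.1).le, (hx.2.trans_le hdb).le⟩
    exact (hf1 x hxab).hasDerivAt
      (Icc_mem_nhds (hac.trans hx.1) (hx.2.trans_le hdb))
  obtain ⟨ξ, hξ, hξeq⟩ := exists_hasDerivAt_eq_slope f f1 hcd hcont hderiv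
  have h1 : f1 ξ < 0 := hneg ξ hξ
  have h2' : 0 ≤ (f d - f c) / (d - c) := by
    have hfd : f c ≤ f d := hmin d ⟨hac.le.trans hcd.le, hdb⟩
    exact div_nonneg (by linarith) (by linarith)
  rw [hξeq] at h1
  linarith

lemma mul_nonneg_of_nonpos_nonpos' {x y : ℝ} (hx : x ≤ 0) (hy : y ≤ 0) : 0 ≤ x * y := by
  nlinarith

/-- Weak minimum principle (Corollary 2.3): if `𝓛u ≥ 0` on `[0,l] × (0,T]` and the
admissible function `u` attains a negative minimum over `Q̄` at `(x₀, t₀)`, then `t₀ = 0`. -/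
theorem weak_minimum_principle
    (l T q₀ : ℝ) (hl : 0 < l) (hT : 0 < T) (hq₀ : 0 < q₀)
    (a a' q : ℝ → ℝ)
    (ha : ∀ x ∈ Icc (0:ℝ) l, HasDerivWithinAt a (a' x) (Icc (0:ℝ) l) x)
    (ha'c : ContinuousOn a' (Icc (0:ℝ) l))
    (ha0 : a 0 = 0) (hal : a l = 0)
    (hapos : ∀ x ∈ Ioo (0:ℝ) l, 0 < a x)
    (hqc : ContinuousOn q (Icc (0:ℝ) l))
    (hq : ∀ x ∈ Icc (0:ℝ) l, q₀ ≤ q x)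
    (u ut ux uxx : ℝ → ℝ → ℝ)
    (hu : ContinuousOn (fun p : ℝ × ℝ => u p.1 p.2) (Icc (0:ℝ) l ×ˢ Icc (0:ℝ) T))
    (hut : ∀ x ∈ Icc (0:ℝ) l, ∀ t ∈ Ioc (0:ℝ) T,
      HasDerivWithinAt (fun τ => u x τ) (ut x t) (Icc (0:ℝ) T) t)
    (hux : ∀ x ∈ Icc (0:ℝ) l, ∀ t ∈ Ioc (0:ℝ) T,
      HasDerivWithinAt (fun s => u s t) (ux x t) (Icc (0:ℝ) l) x)
    (huxx : ∀ x ∈ Icc (0:ℝ) l, ∀ t ∈ Ioc (0:ℝ) T,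
      HasDerivWithinAt (fun s => ux s t) (uxx x t) (Icc (0:ℝ) l) x)
    (hL : ∀ x ∈ Icc (0:ℝ) l, ∀ t ∈ Ioc (0:ℝ) T,
      0 ≤ ut x t - (a x * uxx x t + a' x * ux x t) + q x * u x t)
    (x₀ t₀ : ℝ) (hx₀ : x₀ ∈ Icc (0:ℝ) l) (ht₀ : t₀ ∈ Icc (0:ℝ) T)
    (hneg : u x₀ t₀ < 0)
    (hmin : ∀ x ∈ Icc (0:ℝ) l, ∀ t ∈ Icc (0:ℝ) T, u x₀ t₀ ≤ u x t) :
    t₀ = 0 := by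
  by_contra ht0
  have ht₀pos : 0 < t₀ := lt_of_le_of_ne ht₀.1 (Ne.symm ht0)
  have ht₀' : t₀ ∈ Ioc (0:ℝ) T := ⟨ht₀pos, ht₀.2⟩
  -- a is nonnegative on [0,l]
  have hanonneg : ∀ x ∈ Icc (0:ℝ) l, 0 ≤ a x := by
    intro x hx
    rcases eq_or_lt_of_le hx.1 with h | h
    · rw [← h, ha0]
    · rcases eq_or_lt_of_le hx.2 with h' | h'
      · rw [h', hal]
      · exact (hapos x ⟨h, h'⟩).le
  -- time derivative at the minimum is ≤ 0
  have hut0 : ut x₀ t₀ ≤ 0 :=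
    min_deriv_nonpos_of_lt ht₀pos ht₀.2 (hut x₀ hx₀ t₀ ht₀')
      (fun τ hτ => hmin x₀ hx₀ τ hτ)
  -- q·u term is negative
  have hqu : q x₀ * u x₀ t₀ < 0 :=
    mul_neg_of_pos_of_neg (lt_of_lt_of_le hq₀ (hq x₀ hx₀)) hneg
  -- the spatial term is nonnegative
  have hS : 0 ≤ a x₀ * uxx x₀ t₀ + a' x₀ * ux x₀ t₀ := by
    rcases eq_or_lt_of_le hx₀.1 with h0 | h0
    · -- x₀ = 0
      have hx0 : x₀ = 0 := h0.symm
      subst hx0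
      rw [ha0, zero_mul, zero_add]
      have ha'0 : 0 ≤ a' 0 := by
        refine min_left_deriv_nonneg hl (ha 0 ⟨le_refl 0, hl.le⟩) ?_
        intro x hx; rw [ha0]; exact hanonneg x hx
      have hux0 : 0 ≤ ux 0 t₀ := by
        refine min_left_deriv_nonneg hl (hux 0 ⟨le_refl 0, hl.le⟩ t₀ ht₀') ?_
        intro x hx; exact hmin x hx t₀ ht₀
      exact mul_nonneg ha'0 hux0
    · rcases eq_or_lt_of_le hx₀.2 with hL' | hL'
      · -- x₀ = l
        subst hL'
        rw [hal, zero_mul, zero_add]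
        have ha'l : a' x₀ ≤ 0 := by
          refine min_right_deriv_nonpos h0 (ha x₀ hx₀) ?_
          intro x hx; rw [hal]; exact hanonneg x hx
        have huxl : ux x₀ t₀ ≤ 0 := by
          refine min_right_deriv_nonpos h0 (hux x₀ hx₀ t₀ ht₀') ?_
          intro x hx; exact hmin x hx t₀ ht₀
        exact mul_nonneg_of_nonpos_nonpos' ha'l huxl
      · -- interior point
        have hux0 : ux x₀ t₀ = 0 := by
          have hDA : HasDerivAt (fun s => u s t₀) (ux x₀ t₀) x₀ :=
            (hux x₀ hx₀ t₀ ht₀').hasDerivAt (Icc_mem_nhds h0 hL')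
          have hloc : IsLocalMin (fun s => u s t₀) x₀ := by
            refine Filter.eventually_of_mem (Icc_mem_nhds h0 hL') ?_
            intro x hx; exact hmin x hx t₀ ht₀
          exact hloc.hasDerivAt_eq_zero hDA
        have huxx0 : 0 ≤ uxx x₀ t₀ := by
          refine second_deriv_nonneg_at_interior_min h0 hL'
            (fun x hx => hux x hx t₀ ht₀') (huxx x₀ hx₀ t₀ ht₀') hux0 ?_
          intro x hx; exact hmin x hx t₀ ht₀
        rw [hux0, mul_zero, add_zero]
        exact mul_nonneg (hapos x₀ ⟨h0, hL'⟩).le huxx0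
  have := hL x₀ hx₀ t₀ ht₀'
  linarith
end

section
/- Comparison principle used in the proof of Theorem 2.4: Let v be admissible and satisfy 𝓛v(x,t) ≥ 0 for every (x,t) ∈ [0,l] × (0,T] and v(x,0) ≥ 0 for every x ∈ [0,l]. Then v(x,t) ≥ 0 for every (x,t) ∈ Q̄. -/
open Set Topology Filter


lemma left_min_deriv_nonpos {f : ℝ → ℝ} {f' c b : ℝ} (hcb : c < b)
    (hd : HasDerivWithinAt f f' (Ioo c b) b) (hmin : ∀ τ ∈ Ioo c b, f b ≤ f τ) : f' ≤ 0 := by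
  rw [hasDerivWithinAt_iff_tendsto_slope] at hd
  rw [diff_singleton_eq_self (fun h => absurd h.2 (lt_irrefl b))] at hd
  have hne : (𝓝[Ioo c b] b).NeBot := by
    apply mem_closure_iff_nhdsWithin_neBot.1
    rw [closure_Ioo hcb.ne]
    exact ⟨hcb.le, le_refl b⟩
  refine le_of_tendsto hd (eventually_nhdsWithin_of_forall fun τ hτ => ?_)
  rw [slope_def_field]
  exact div_nonpos_of_nonneg_of_nonpos (sub_nonneg.2 (hmin τ hτ)) (sub_nonpos.2 hτ.2.le)

lemma right_min_deriv_nonneg {f : ℝ → ℝ} {f' b d : ℝ} (hbd : b < d)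
    (hd : HasDerivWithinAt f f' (Ioo b d) b) (hmin : ∀ τ ∈ Ioo b d, f b ≤ f τ) : 0 ≤ f' := by
  rw [hasDerivWithinAt_iff_tendsto_slope] at hd
  rw [diff_singleton_eq_self (fun h => absurd h.1 (lt_irrefl b))] at hd
  have hne : (𝓝[Ioo b d] b).NeBot := by
    apply mem_closure_iff_nhdsWithin_neBot.1
    rw [closure_Ioo hbd.ne]
    exact ⟨le_refl b, hbd.le⟩
  refine ge_of_tendsto hd (eventually_nhdsWithin_of_forall fun τ hτ => ?_)
  rw [slope_def_field]
  exact div_nonneg (sub_nonneg.2 (hmin τ hτ)) (sub_nonneg.2 hτ.1.le)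

lemma second_deriv_nonneg_at_interior_min_s4 {l : ℝ} {f g : ℝ → ℝ} {g' x₀ : ℝ}
    (hx₀ : x₀ ∈ Ioo (0:ℝ) l)
    (hf : ∀ x ∈ Icc (0:ℝ) l, HasDerivWithinAt f (g x) (Icc (0:ℝ) l) x)
    (hg : HasDerivWithinAt g g' (Icc (0:ℝ) l) x₀)
    (hg0 : g x₀ = 0)
    (hmin : ∀ x ∈ Icc (0:ℝ) l, f x₀ ≤ f x) : 0 ≤ g' := by
  by_contra hcon
  push_neg at hcon
  have hx₀m : x₀ ∈ Icc (0:ℝ) l := ⟨hx₀.1.le, hx₀.2.le⟩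
  rw [hasDerivWithinAt_iff_tendsto_slope] at hg
  have hev : ∀ᶠ y in 𝓝[Icc (0:ℝ) l \ {x₀}] x₀, slope g x₀ y < 0 :=
    hg (Iio_mem_nhds hcon)
  rw [eventually_nhdsWithin_iff] at hev
  obtain ⟨ε, hε, hball⟩ := Metric.eventually_nhds_iff.1 hev
  set s := min (x₀ + ε / 2) ((x₀ + l) / 2) with hs
  have hx₀s : x₀ < s := lt_min (by linarith) (by linarith [hx₀.2])
  have hsl : s < l := lt_of_le_of_lt (min_le_right _ _) (by linarith [hx₀.2])
  have hsub : Ioo x₀ s ⊆ Icc (0:ℝ) l :=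
    fun y hy => ⟨le_trans hx₀.1.le hy.1.le, le_trans hy.2.le hsl.le⟩
  have hgneg : ∀ y ∈ Ioo x₀ s, g y < 0 := by
    intro y hy
    have hdist : dist y x₀ < ε := by
      rw [Real.dist_eq, abs_of_nonneg (by linarith [hy.1])]
      have : y < x₀ + ε / 2 := lt_of_lt_of_le hy.2 (min_le_left _ _)
      linarith
    have hslope : slope g x₀ y < 0 :=
      hball hdist ⟨hsub hy, fun h => absurd (h ▸ hy.1) (lt_irrefl _)⟩
    rw [slope_def_field, hg0, sub_zero] at hslope
    have hy' : 0 < y - x₀ := by linarith [hy.1]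
    rcases div_neg_iff.1 hslope with h | h
    · exact absurd h.2 (not_lt.2 hy'.le)
    · exact h.1
  have hcont : ContinuousOn f (Icc x₀ s) := fun x hx =>
    ((hf x ⟨le_trans hx₀.1.le hx.1, le_trans hx.2 hsl.le⟩).continuousWithinAt).mono
      (fun y hy => ⟨le_trans hx₀.1.le hy.1, le_trans hy.2 hsl.le⟩)
  have hanti : StrictAntiOn f (Icc x₀ s) := by
    apply strictAntiOn_of_hasDerivWithinAt_neg (convex_Icc x₀ s) hcont
    · intro x hx
      rw [interior_Icc] at hx
      rw [interior_Icc]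
      exact (hf x (hsub hx)).mono hsub
    · intro x hx
      rw [interior_Icc] at hx
      exact hgneg x hx
  have h1 : f s < f x₀ :=
    hanti ⟨le_refl x₀, hx₀s.le⟩ ⟨hx₀s.le, le_refl s⟩ hx₀s
  have h2 : f x₀ ≤ f s := hmin s ⟨le_trans hx₀.1.le hx₀s.le, hsl.le⟩
  linarith


/-- Comparison principle used in the proof of Theorem 2.4: if the admissible function `v`
satisfies `𝓛v ≥ 0` on `[0,l] × (0,T]` and `v(·,0) ≥ 0`, then `v ≥ 0` on `Q̄`. -/
theorem comparison_principle
    (l T q₀ : ℝ) (hl : 0 < l) (hT : 0 < T) (hq₀ : 0 < q₀)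
    (a a' q : ℝ → ℝ)
    (ha : ∀ x ∈ Icc (0:ℝ) l, HasDerivWithinAt a (a' x) (Icc (0:ℝ) l) x)
    (ha'c : ContinuousOn a' (Icc (0:ℝ) l))
    (ha0 : a 0 = 0) (hal : a l = 0)
    (hapos : ∀ x ∈ Ioo (0:ℝ) l, 0 < a x)
    (hqc : ContinuousOn q (Icc (0:ℝ) l))
    (hq : ∀ x ∈ Icc (0:ℝ) l, q₀ ≤ q x)
    (u ut ux uxx : ℝ → ℝ → ℝ)
    (hu : ContinuousOn (fun p : ℝ × ℝ => u p.1 p.2) (Icc (0:ℝ) l ×ˢ Icc (0:ℝ) T))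
    (hut : ∀ x ∈ Icc (0:ℝ) l, ∀ t ∈ Ioc (0:ℝ) T,
      HasDerivWithinAt (fun τ => u x τ) (ut x t) (Icc (0:ℝ) T) t)
    (hux : ∀ x ∈ Icc (0:ℝ) l, ∀ t ∈ Ioc (0:ℝ) T,
      HasDerivWithinAt (fun s => u s t) (ux x t) (Icc (0:ℝ) l) x)
    (huxx : ∀ x ∈ Icc (0:ℝ) l, ∀ t ∈ Ioc (0:ℝ) T,
      HasDerivWithinAt (fun s => ux s t) (uxx x t) (Icc (0:ℝ) l) x)
    (hL : ∀ x ∈ Icc (0:ℝ) l, ∀ t ∈ Ioc (0:ℝ) T,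
      0 ≤ ut x t - (a x * uxx x t + a' x * ux x t) + q x * u x t)
    (hinit : ∀ x ∈ Icc (0:ℝ) l, 0 ≤ u x 0) :
    ∀ x ∈ Icc (0:ℝ) l, ∀ t ∈ Icc (0:ℝ) T, 0 ≤ u x t := by
  have hKc : IsCompact (Icc (0:ℝ) l ×ˢ Icc (0:ℝ) T) := isCompact_Icc.prod isCompact_Icc
  have hKne : (Icc (0:ℝ) l ×ˢ Icc (0:ℝ) T).Nonempty :=
    ⟨(0, 0), ⟨⟨le_refl 0, hl.le⟩, ⟨le_refl 0, hT.le⟩⟩⟩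
  obtain ⟨⟨x₀, t₀⟩, hpK, hpmin⟩ := hKc.exists_isMinOn hKne hu
  have hmin2 : ∀ p ∈ Icc (0:ℝ) l ×ˢ Icc (0:ℝ) T, u x₀ t₀ ≤ u p.1 p.2 :=
    fun p hp => hpmin hp
  have hx₀ : x₀ ∈ Icc (0:ℝ) l := hpK.1
  have ht₀ : t₀ ∈ Icc (0:ℝ) T := hpK.2
  intro x hx t ht
  have key : 0 ≤ u x₀ t₀ := by
    by_contra hm
    push_neg at hm
    -- t₀ > 0
    have ht₀pos : 0 < t₀ := by
      rcases eq_or_lt_of_le ht₀.1 with h | h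
      · exfalso
        have := hinit x₀ hx₀
        rw [← h] at hm
        linarith
      · exact h
    have ht₀' : t₀ ∈ Ioc (0:ℝ) T := ⟨ht₀pos, ht₀.2⟩
    -- time derivative nonpositive
    have hutle : ut x₀ t₀ ≤ 0 := by
      apply left_min_deriv_nonpos (c := 0) ht₀pos
      · exact (hut x₀ hx₀ t₀ ht₀').mono (fun τ hτ => ⟨hτ.1.le, hτ.2.le.trans ht₀.2⟩)
      · exact fun τ hτ => hmin2 (x₀, τ) ⟨hx₀, ⟨hτ.1.le, hτ.2.le.trans ht₀.2⟩⟩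
    -- spatial part nonnegative
    have hA : 0 ≤ a x₀ * uxx x₀ t₀ + a' x₀ * ux x₀ t₀ := by
      rcases eq_or_lt_of_le hx₀.1 with h0 | h0
      · -- x₀ = 0
        have hx0 : x₀ = 0 := h0.symm
        subst hx0
        have huxge : 0 ≤ ux 0 t₀ := by
          apply right_min_deriv_nonneg (d := l) hl
          · exact (hux 0 hx₀ t₀ ht₀').mono Ioo_subset_Icc_self
          · exact fun τ hτ => hmin2 (τ, t₀) ⟨⟨hτ.1.le, hτ.2.le⟩, ht₀⟩
        have ha'ge : 0 ≤ a' 0 := by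
          apply right_min_deriv_nonneg (d := l) hl
          · exact (ha 0 hx₀).mono Ioo_subset_Icc_self
          · exact fun τ hτ => by rw [ha0]; exact (hapos τ hτ).le
        rw [ha0]
        simpa using mul_nonneg ha'ge huxge
      rcases eq_or_lt_of_le hx₀.2 with hll | hll
      · -- x₀ = l
        subst hll
        have huxle : ux x₀ t₀ ≤ 0 := by
          apply left_min_deriv_nonpos (c := 0) h0
          · exact (hux x₀ hx₀ t₀ ht₀').mono Ioo_subset_Icc_self
          · exact fun τ hτ => hmin2 (τ, t₀) ⟨⟨hτ.1.le, hτ.2.le⟩, ht₀⟩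
        have ha'le : a' x₀ ≤ 0 := by
          apply left_min_deriv_nonpos (c := 0) h0
          · exact (ha x₀ hx₀).mono Ioo_subset_Icc_self
          · exact fun τ hτ => by rw [hal]; exact (hapos τ hτ).le
        rw [hal]
        simpa using (by nlinarith : (0:ℝ) ≤ a' x₀ * ux x₀ t₀)
      · -- interior
        have hxIoo : x₀ ∈ Ioo (0:ℝ) l := ⟨h0, hll⟩
        have hmx : ∀ y ∈ Icc (0:ℝ) l, u x₀ t₀ ≤ u y t₀ :=
          fun y hy => hmin2 (y, t₀) ⟨hy, ht₀⟩
        have huxz : ux x₀ t₀ = 0 := by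
          apply le_antisymm
          · apply left_min_deriv_nonpos (c := 0) h0
            · exact (hux x₀ hx₀ t₀ ht₀').mono (fun τ hτ => ⟨hτ.1.le, hτ.2.le.trans hll.le⟩)
            · exact fun τ hτ => hmx τ ⟨hτ.1.le, hτ.2.le.trans hll.le⟩
          · apply right_min_deriv_nonneg (d := l) hll
            · exact (hux x₀ hx₀ t₀ ht₀').mono (fun τ hτ => ⟨h0.le.trans hτ.1.le, hτ.2.le⟩)
            · exact fun τ hτ => hmx τ ⟨h0.le.trans hτ.1.le, hτ.2.le⟩
        have huxxge : 0 ≤ uxx x₀ t₀ :=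
          second_deriv_nonneg_at_interior_min_s4 hxIoo
            (fun y hy => hux y hy t₀ ht₀') (huxx x₀ hx₀ t₀ ht₀') huxz hmx
        rw [huxz]
        simpa using mul_nonneg (hapos x₀ hxIoo).le huxxge
    have hLp := hL x₀ hx₀ t₀ ht₀'
    have hqm : q x₀ * u x₀ t₀ ≤ q₀ * u x₀ t₀ :=
      mul_le_mul_of_nonpos_right (hq x₀ hx₀) hm.le
    nlinarith
  exact le_trans key (hmin2 (x, t) ⟨hx, ht⟩)
end

section
/- A priori sup-norm estimate (Theorem 2.4): Let f : Q → ℝ be bounded, φ : [0,l] → ℝ bounded, and let u be an admissible function satisfying 𝓛u(x,t) = f(x,t) for every (x,t) ∈ [0,l] × (0,T] and u(x,0) = φ(x) for every x ∈ [0,l]. Then max_{(x,t) ∈ Q̄} |u(x,t)| ≤ max{ (1/q₀) · sup_Q |f| , sup_{x ∈ [0,l]} |φ(x)| }. -/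
open Set

open Filter Topology intervalIntegral MeasureTheory

lemma slope_left_nonneg (g : ℝ → ℝ) {s : Set ℝ} {x d a : ℝ} (hax : a < x)
    (hs : Ioo a x ⊆ s) (hd : HasDerivWithinAt g d s x)
    (hmax : ∀ y ∈ Ioo a x, g y ≤ g x) : 0 ≤ d := by
  have ht : Tendsto (slope g x) (𝓝[s \ {x}] x) (𝓝 d) :=
    hasDerivWithinAt_iff_tendsto_slope.mp hd
  have hsub : Ioo a x ⊆ s \ {x} := fun y hy => ⟨hs hy, fun h => absurd (h ▸ hy.2) (lt_irrefl x)⟩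
  have hne : (𝓝[Ioo a x] x).NeBot := by
    apply mem_closure_iff_nhdsWithin_neBot.mp
    rw [closure_Ioo hax.ne]
    exact ⟨hax.le, le_refl x⟩
  have ht2 : Tendsto (slope g x) (𝓝[Ioo a x] x) (𝓝 d) :=
    ht.mono_left (nhdsWithin_mono _ hsub)
  refine ge_of_tendsto ht2 ?_
  filter_upwards [self_mem_nhdsWithin] with y hy
  rw [slope_def_field]
  exact div_nonneg_of_nonpos (sub_nonpos.mpr (hmax y hy)) (sub_nonpos.mpr hy.2.le)

lemma slope_right_nonpos (g : ℝ → ℝ) {s : Set ℝ} {x d b : ℝ} (hxb : x < b)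
    (hs : Ioo x b ⊆ s) (hd : HasDerivWithinAt g d s x)
    (hmax : ∀ y ∈ Ioo x b, g y ≤ g x) : d ≤ 0 := by
  have ht : Tendsto (slope g x) (𝓝[s \ {x}] x) (𝓝 d) :=
    hasDerivWithinAt_iff_tendsto_slope.mp hd
  have hsub : Ioo x b ⊆ s \ {x} := fun y hy => ⟨hs hy, fun h => absurd (h ▸ hy.1) (lt_irrefl x)⟩
  have hne : (𝓝[Ioo x b] x).NeBot := by
    apply mem_closure_iff_nhdsWithin_neBot.mp
    rw [closure_Ioo hxb.ne]
    exact ⟨le_refl x, hxb.le⟩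
  have ht2 : Tendsto (slope g x) (𝓝[Ioo x b] x) (𝓝 d) :=
    ht.mono_left (nhdsWithin_mono _ hsub)
  refine le_of_tendsto ht2 ?_
  filter_upwards [self_mem_nhdsWithin] with y hy
  rw [slope_def_field]
  exact div_nonpos_of_nonpos_of_nonneg (sub_nonpos.mpr (hmax y hy)) (sub_nonneg.mpr hy.1.le)

lemma sd_test {c d x₀ D : ℝ} {φ ψ : ℝ → ℝ} (hx : x₀ ∈ Ioo c d)
    (hφc : ContinuousOn φ (Icc c d))
    (hφd : ∀ x ∈ Ioo c d, HasDerivAt φ (ψ x) x)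
    (hψ0 : ψ x₀ = 0) (hψd : HasDerivAt ψ D x₀)
    (hmax : ∀ x ∈ Icc c d, φ x ≤ φ x₀) : D ≤ 0 := by
  by_contra hD
  push_neg at hD
  have ht : Tendsto (slope ψ x₀) (𝓝[≠] x₀) (𝓝 D) := hasDerivAt_iff_tendsto_slope.mp hψd
  have ht' : Tendsto (slope ψ x₀) (𝓝[>] x₀) (𝓝 D) :=
    ht.mono_left (nhdsWithin_mono _ fun y hy => ne_of_gt hy)
  have hev : ∀ᶠ y in 𝓝[>] x₀, 0 < slope ψ x₀ y := ht'.eventually (eventually_gt_nhds hD)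
  have hev2 : Ioo x₀ d ∈ 𝓝[>] x₀ := Ioo_mem_nhdsGT_of_mem ⟨le_refl x₀, hx.2⟩
  have hmem : {y | 0 < slope ψ x₀ y} ∩ Ioo x₀ d ∈ 𝓝[>] x₀ := inter_mem hev hev2
  obtain ⟨w, hw, hsub⟩ := mem_nhdsGT_iff_exists_Ioo_subset.mp hmem
  -- every y in Ioo x₀ w : ψ y > 0 and y < d
  have hpos : ∀ y ∈ Ioo x₀ w, 0 < ψ y ∧ y < d := by
    intro y hy
    obtain ⟨h1, h2⟩ := hsub hy
    have h1' : 0 < slope ψ x₀ y := h1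
    constructor
    · rw [slope_def_field, hψ0, sub_zero] at h1'
      rcases div_pos_iff.mp h1' with ⟨hn, _⟩ | ⟨_, hdn⟩
      · exact hn
      · linarith [hy.1]
    · exact h2.2
  set x₁ := (x₀ + w) / 2 with hx₁def
  have hww : x₀ < w := hw
  have hx₁ : x₁ ∈ Ioo x₀ w := ⟨by simp only [hx₁def]; linarith, by simp only [hx₁def]; linarith⟩
  have hx₁d : x₁ < d := (hpos x₁ hx₁).2
  have hx₀x₁ : x₀ < x₁ := hx₁.1
  obtain ⟨c', hc', hc'eq⟩ := exists_hasDerivAt_eq_slope φ ψ hx₀x₁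
    (hφc.mono (Icc_subset_Icc hx.1.le hx₁d.le))
    (fun y hy => hφd y ⟨lt_trans hx.1 hy.1, lt_trans hy.2 hx₁d⟩)
  have hc'pos : 0 < ψ c' := (hpos c' ⟨hc'.1, lt_trans hc'.2 hx₁.2⟩).1
  rw [hc'eq] at hc'pos
  have : φ x₁ ≤ φ x₀ := hmax x₁ ⟨le_trans hx.1.le hx₀x₁.le, hx₁d.le⟩
  have hd2 : 0 < x₁ - x₀ := sub_pos.mpr hx₀x₁
  rcases div_pos_iff.mp hc'pos with ⟨hn, _⟩ | ⟨_, hdn⟩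
  · linarith
  · linarith

lemma barrier_exists (l : ℝ) (hl : 0 < l) (a a' : ℝ → ℝ)
    (ha : ∀ x ∈ Icc (0:ℝ) l, HasDerivWithinAt a (a' x) (Icc (0:ℝ) l) x)
    (ha'c : ContinuousOn a' (Icc (0:ℝ) l))
    (ha0 : a 0 = 0) (hal : a l = 0)
    (hapos : ∀ x ∈ Ioo (0:ℝ) l, 0 < a x) :
    ∃ h b1 b2 : ℝ → ℝ,
      (∀ x ∈ Ioo (0:ℝ) l, HasDerivAt h (b1 x) x) ∧
      (∀ x ∈ Ioo (0:ℝ) l, HasDerivAt b1 (b2 x) x) ∧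
      (∀ x ∈ Ioo (0:ℝ) l, a x * b2 x + a' x * b1 x = 1) ∧
      (∀ x ∈ Ioo (0:ℝ) l, 0 ≤ h x) ∧
      (∀ C δ₀ : ℝ, 0 < δ₀ → ∃ δ, 0 < δ ∧ δ < δ₀ ∧ 2*δ < l ∧
        (∀ y ∈ Ioo (0:ℝ) l, y ≤ δ → C ≤ h y) ∧
        (∀ y ∈ Ioo (0:ℝ) l, l - δ ≤ y → C ≤ h y)) := by
  have hacont : ContinuousOn a (Icc 0 l) := fun x hx => (ha x hx).continuousWithinAt
  obtain ⟨L₀, hL₀⟩ := isCompact_Icc.exists_bound_of_continuousOn ha'c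
  set L := max L₀ 1 with hLdef
  have hL1 : (1:ℝ) ≤ L := le_max_right _ _
  have hLpos : (0:ℝ) < L := lt_of_lt_of_le one_pos hL1
  have hL : ∀ x ∈ Icc (0:ℝ) l, |a' x| ≤ L := fun x hx =>
    le_trans (hL₀ x hx) (le_max_left _ _)
  -- a x ≤ L * x and a x ≤ L * (l - x)
  have haxle : ∀ x ∈ Icc (0:ℝ) l, a x ≤ L * x := by
    intro x hx
    have := (convex_Icc (0:ℝ) l).norm_image_sub_le_of_norm_hasDerivWithin_le ha
      (fun y hy => hL y hy) (left_mem_Icc.mpr hl.le) hx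
    rw [ha0, sub_zero, sub_zero, Real.norm_eq_abs, Real.norm_eq_abs] at this
    calc a x ≤ |a x| := le_abs_self _
    _ ≤ L * |x| := this
    _ = L * x := by rw [abs_of_nonneg hx.1]
  have haxle' : ∀ x ∈ Icc (0:ℝ) l, a x ≤ L * (l - x) := by
    intro x hx
    have := (convex_Icc (0:ℝ) l).norm_image_sub_le_of_norm_hasDerivWithin_le ha
      (fun y hy => hL y hy) (right_mem_Icc.mpr hl.le) hx
    rw [hal, sub_zero, Real.norm_eq_abs, Real.norm_eq_abs] at this
    calc a x ≤ |a x| := le_abs_self _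
    _ ≤ L * |x - l| := this
    _ = L * (l - x) := by rw [abs_of_nonpos (by linarith [hx.2])]; ring
  set b1 : ℝ → ℝ := fun s => (s - l/2) / a s with hb1def
  set b2 : ℝ → ℝ := fun s => (1 * a s - (s - l/2) * a' s) / a s ^ 2 with hb2def
  set h : ℝ → ℝ := fun x => ∫ s in (l/2)..x, b1 s with hhdef
  have hl2 : l/2 ∈ Ioo (0:ℝ) l := ⟨by linarith, by linarith⟩
  have hb1c : ContinuousOn b1 (Ioo 0 l) := by
    apply ContinuousOn.div
    · exact (continuous_id.sub continuous_const).continuousOn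
    · exact hacont.mono Ioo_subset_Icc_self
    · exact fun x hx => ne_of_gt (hapos x hx)
  have hsubIoo : ∀ x ∈ Ioo (0:ℝ) l, ∀ y ∈ Ioo (0:ℝ) l, uIcc x y ⊆ Ioo (0:ℝ) l := by
    intro x hx y hy
    rw [uIcc]
    exact Icc_subset_Ioo (lt_min hx.1 hy.1) (max_lt hx.2 hy.2)
  have hint : ∀ x ∈ Ioo (0:ℝ) l, ∀ y ∈ Ioo (0:ℝ) l, IntervalIntegrable b1 volume x y := by
    intro x hx y hy
    exact (hb1c.mono (hsubIoo x hx y hy)).intervalIntegrable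
  have hderiv : ∀ x ∈ Ioo (0:ℝ) l, HasDerivAt h (b1 x) x := by
    intro x hx
    exact integral_hasDerivAt_right (hint _ hl2 _ hx)
      (hb1c.stronglyMeasurableAtFilter isOpen_Ioo x hx)
      (hb1c.continuousAt (isOpen_Ioo.mem_nhds hx))
  have hb1deriv : ∀ x ∈ Ioo (0:ℝ) l, HasDerivAt b1 (b2 x) x := by
    intro x hx
    have hax : HasDerivAt a (a' x) x :=
      (ha x (Ioo_subset_Icc_self hx)).hasDerivAt (Icc_mem_nhds hx.1 hx.2)
    exact ((hasDerivAt_id x).sub_const (l/2)).div hax (ne_of_gt (hapos x hx))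
  have hident : ∀ x ∈ Ioo (0:ℝ) l, a x * b2 x + a' x * b1 x = 1 := by
    intro x hx
    have hax := ne_of_gt (hapos x hx)
    simp only [hb1def, hb2def]
    field_simp
    ring
  -- sign of b1
  have hb1sgn_left : ∀ s ∈ Ioo (0:ℝ) l, s ≤ l/2 → b1 s ≤ 0 := by
    intro s hs hsle
    exact div_nonpos_of_nonpos_of_nonneg (by linarith) (hapos s hs).le
  have hb1sgn_right : ∀ s ∈ Ioo (0:ℝ) l, l/2 ≤ s → 0 ≤ b1 s := by
    intro s hs hsle
    exact div_nonneg (by linarith) (hapos s hs).le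
  -- monotonicity: h x ≥ h y when x ≤ y ≤ l/2
  have hmono_left : ∀ x ∈ Ioo (0:ℝ) l, ∀ y ∈ Ioo (0:ℝ) l, x ≤ y → y ≤ l/2 → h y ≤ h x := by
    intro x hx y hy hxy hyl
    have hadd : h y + ∫ s in y..x, b1 s = h x :=
      integral_add_adjacent_intervals (hint _ hl2 _ hy) (hint _ hy _ hx)
    have : 0 ≤ ∫ s in y..x, b1 s := by
      rw [integral_symm]
      have : 0 ≤ ∫ s in x..y, (- b1 s) := by
        apply integral_nonneg hxy
        intro u hu
        have hu' : u ∈ Ioo (0:ℝ) l := ⟨lt_of_lt_of_le hx.1 hu.1, lt_of_le_of_lt (le_trans hu.2 hyl) hl2.2⟩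
        simp only [neg_nonneg]
        exact hb1sgn_left u hu' (le_trans hu.2 hyl)
      rw [intervalIntegral.integral_neg] at this
      linarith
    linarith
  have hmono_right : ∀ x ∈ Ioo (0:ℝ) l, ∀ y ∈ Ioo (0:ℝ) l, y ≤ x → l/2 ≤ y → h y ≤ h x := by
    intro x hx y hy hxy hyl
    have hadd : h y + ∫ s in y..x, b1 s = h x :=
      integral_add_adjacent_intervals (hint _ hl2 _ hy) (hint _ hy _ hx)
    have : 0 ≤ ∫ s in y..x, b1 s := by
      apply integral_nonneg hxy
      intro u hu
      exact hb1sgn_right u ⟨lt_of_lt_of_le hl2.1 (le_trans hyl hu.1), lt_of_le_of_lt hu.2 hx.2⟩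
        (le_trans hyl hu.1)
    linarith
  -- nonnegativity
  have hnonneg : ∀ x ∈ Ioo (0:ℝ) l, 0 ≤ h x := by
    intro x hx
    have hhl2 : h (l/2) = 0 := by simp [hhdef]
    rcases le_or_gt x (l/2) with hc | hc
    · have := hmono_left x hx (l/2) hl2 hc le_rfl
      linarith
    · have := hmono_right x hx (l/2) hl2 hc.le le_rfl
      linarith
  refine ⟨h, b1, b2, hderiv, hb1deriv, hident, hnonneg, ?_⟩
  intro C δ₀ hδ₀
  set E := (4*L/l) * (|C|+1) with hEdef
  set δ := min (min (δ₀/2) (l/8)) ((l/4) * Real.exp (-E)) with hδdef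
  have hδpos : 0 < δ := by positivity
  have hδδ₀ : δ < δ₀ := lt_of_le_of_lt (le_trans (min_le_left _ _) (min_le_left _ _)) (by linarith)
  have hδl8 : δ ≤ l/8 := le_trans (min_le_left _ _) (min_le_right _ _)
  have hδl4 : δ < l/4 := lt_of_le_of_lt hδl8 (by linarith)
  have hδIoo : δ ∈ Ioo (0:ℝ) l := ⟨hδpos, by linarith⟩
  have hlδIoo : l - δ ∈ Ioo (0:ℝ) l := ⟨by linarith, by linarith⟩
  have h3l4 : (3*l/4) ∈ Ioo (0:ℝ) l := ⟨by linarith, by linarith⟩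
  have hl4 : (l/4) ∈ Ioo (0:ℝ) l := ⟨by linarith, by linarith⟩
  -- key log bound
  have hexp : Real.exp E ≤ (l/4)/δ := by
    have h1 : δ ≤ (l/4) * Real.exp (-E) := min_le_right _ _
    rw [Real.exp_neg] at h1
    rw [le_div_iff₀ hδpos]
    calc Real.exp E * δ ≤ Real.exp E * ((l/4) * (Real.exp E)⁻¹) := by
          apply mul_le_mul_of_nonneg_left h1 (Real.exp_pos E).le
    _ = l/4 := by field_simp
  have hClow : C ≤ (l/(4*L)) * Real.log ((l/4)/δ) := by
    have hpos : (0:ℝ) < (l/4)/δ := by positivity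
    have hE : E ≤ Real.log ((l/4)/δ) := (Real.le_log_iff_exp_le hpos).mpr hexp
    have : (l/(4*L)) * E = |C| + 1 := by
      rw [hEdef]; field_simp
    calc C ≤ |C| + 1 := by linarith [le_abs_self C]
    _ = (l/(4*L)) * E := this.symm
    _ ≤ (l/(4*L)) * Real.log ((l/4)/δ) := by
        apply mul_le_mul_of_nonneg_left hE (by positivity)
  -- lower bound for h δ
  have hintlog : ∀ u v : ℝ, 0 < u → u ≤ v → v < l →
      IntervalIntegrable (fun s => (l/(4*L)) * s⁻¹) volume u v := by
    intro u v hu huv hv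
    apply ContinuousOn.intervalIntegrable
    apply ContinuousOn.mul continuousOn_const
    apply ContinuousOn.inv₀ continuousOn_id
    intro s hs
    rw [uIcc_of_le huv] at hs
    exact ne_of_gt (lt_of_lt_of_le hu hs.1)
  have hlogint : ∫ s in δ..(l/4), (l/(4*L)) * s⁻¹ = (l/(4*L)) * Real.log ((l/4)/δ) := by
    rw [intervalIntegral.integral_const_mul, integral_inv]
    rw [uIcc_of_le hδl4.le]
    intro hmem
    exact absurd hmem.1 (not_le.mpr hδpos)
  have hhδ : (l/(4*L)) * Real.log ((l/4)/δ) ≤ h δ := by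
    have hsymm : h δ = ∫ s in δ..(l/2), (fun s => -b1 s) s := by
      show (∫ s in (l/2)..δ, b1 s) = _
      rw [intervalIntegral.integral_symm, intervalIntegral.integral_neg]
    have hadd : (∫ s in δ..(l/4), (fun s => -b1 s) s) + (∫ s in (l/4)..(l/2), (fun s => -b1 s) s)
        = ∫ s in δ..(l/2), (fun s => -b1 s) s :=
      integral_add_adjacent_intervals (hint _ hδIoo _ hl4).neg (hint _ hl4 _ hl2).neg
    have h2nd : 0 ≤ ∫ s in (l/4)..(l/2), (fun s => -b1 s) s := by
      apply integral_nonneg (by linarith)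
      intro u hu
      simp only [neg_nonneg]
      exact hb1sgn_left u ⟨lt_of_lt_of_le hl4.1 hu.1, lt_of_le_of_lt hu.2 hl2.2⟩ hu.2
    have h1st : (∫ s in δ..(l/4), (l/(4*L)) * s⁻¹) ≤ ∫ s in δ..(l/4), (fun s => -b1 s) s := by
      apply integral_mono_on hδl4.le (hintlog δ (l/4) hδpos hδl4.le hl4.2)
        (hint _ hδIoo _ hl4).neg
      intro s hs
      have hs0 : 0 < s := lt_of_lt_of_le hδpos hs.1
      have hsIoo : s ∈ Ioo (0:ℝ) l := ⟨hs0, lt_of_le_of_lt hs.2 hl4.2⟩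
      have has : 0 < a s := hapos s hsIoo
      have hasle : a s ≤ L * s := haxle s (Ioo_subset_Icc_self hsIoo)
      have hLs : L * s ≠ 0 := by positivity
      have heq : (l/(4*L)) * s⁻¹ = (l/4)/(L*s) := by
        rw [← div_eq_mul_inv, div_div, mul_assoc, ← div_div]
      have hb1eq : -(b1 s) = (l/2 - s)/(a s) := by
        simp only [hb1def]
        rw [← neg_div, neg_sub]
      show (l/(4*L)) * s⁻¹ ≤ -(b1 s)
      rw [heq, hb1eq]
      apply div_le_div₀ (by linarith [hs.2]) (by linarith [hs.2]) has hasle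
    linarith [hsymm, hadd]
  -- lower bound for h (l - δ)
  have hintlog' : IntervalIntegrable (fun s => (l/(4*L)) * (l-s)⁻¹) volume (3*l/4) (l-δ) := by
    apply ContinuousOn.intervalIntegrable
    apply ContinuousOn.mul continuousOn_const
    apply ContinuousOn.inv₀ (continuousOn_const.sub continuousOn_id)
    intro s hs
    rw [uIcc_of_le (by linarith : 3*l/4 ≤ l - δ)] at hs
    have : s ≤ l - δ := hs.2
    intro hc
    have : l - s = 0 := hc
    linarith
  have hlogint' : ∫ s in (3*l/4)..(l-δ), (l/(4*L)) * (l-s)⁻¹ = (l/(4*L)) * Real.log ((l/4)/δ) := by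
    rw [intervalIntegral.integral_const_mul]
    have hcomp : (∫ s in (3*l/4)..(l-δ), (l-s)⁻¹) = ∫ x in (l-(l-δ))..(l-3*l/4), x⁻¹ :=
      intervalIntegral.integral_comp_sub_left (fun x => x⁻¹) l
    have e1 : l - (l - δ) = δ := by ring
    have e2 : l - 3*l/4 = l/4 := by ring
    rw [hcomp, e1, e2, integral_inv]
    · rw [uIcc_of_le hδl4.le]
      intro hmem
      exact absurd hmem.1 (not_le.mpr hδpos)
  have hhδ' : (l/(4*L)) * Real.log ((l/4)/δ) ≤ h (l-δ) := by
    have hadd : (∫ s in (l/2)..(3*l/4), b1 s) + (∫ s in (3*l/4)..(l-δ), b1 s)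
        = h (l-δ) :=
      integral_add_adjacent_intervals (hint _ hl2 _ h3l4) (hint _ h3l4 _ hlδIoo)
    have h1st : 0 ≤ ∫ s in (l/2)..(3*l/4), b1 s := by
      apply integral_nonneg (by linarith)
      intro u hu
      exact hb1sgn_right u ⟨lt_of_lt_of_le hl2.1 hu.1, lt_of_le_of_lt hu.2 h3l4.2⟩ hu.1
    have h2nd : (∫ s in (3*l/4)..(l-δ), (l/(4*L)) * (l-s)⁻¹) ≤ ∫ s in (3*l/4)..(l-δ), b1 s := by
      apply integral_mono_on (by linarith) hintlog' (hint _ h3l4 _ hlδIoo)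
      intro s hs
      have hsIoo : s ∈ Ioo (0:ℝ) l := ⟨lt_of_lt_of_le h3l4.1 hs.1, by linarith [hs.2]⟩
      have has : 0 < a s := hapos s hsIoo
      have hasle : a s ≤ L * (l - s) := haxle' s (Ioo_subset_Icc_self hsIoo)
      have hls : 0 < l - s := by linarith [hs.2]
      have hLs : L * (l - s) ≠ 0 := by positivity
      have heq : (l/(4*L)) * (l-s)⁻¹ = (l/4)/(L*(l-s)) := by
        rw [← div_eq_mul_inv, div_div, mul_assoc, ← div_div]
      show (l/(4*L)) * (l-s)⁻¹ ≤ b1 s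
      rw [heq]
      show (l/4)/(L*(l-s)) ≤ (s - l/2)/(a s)
      apply div_le_div₀ (by linarith [hs.1]) (by linarith [hs.1]) has hasle
    linarith [hadd]
  refine ⟨δ, hδpos, hδδ₀, by linarith, ?_, ?_⟩
  · intro y hy hyδ
    have := hmono_left y hy δ hδIoo hyδ (by linarith)
    linarith
  · intro y hy hyδ
    have := hmono_right y hy (l-δ) hlδIoo hyδ (by linarith)
    linarith
theorem aux_upper
    (l T q₀ : ℝ) (hl : 0 < l) (hT : 0 < T) (hq₀ : 0 < q₀)
    (a a' q : ℝ → ℝ)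
    (ha : ∀ x ∈ Icc (0:ℝ) l, HasDerivWithinAt a (a' x) (Icc (0:ℝ) l) x)
    (ha'c : ContinuousOn a' (Icc (0:ℝ) l))
    (ha0 : a 0 = 0) (hal : a l = 0)
    (hapos : ∀ x ∈ Ioo (0:ℝ) l, 0 < a x)
    (hq : ∀ x ∈ Icc (0:ℝ) l, q₀ ≤ q x)
    (u ut ux uxx : ℝ → ℝ → ℝ)
    (hu : ContinuousOn (fun p : ℝ × ℝ => u p.1 p.2) (Icc (0:ℝ) l ×ˢ Icc (0:ℝ) T))
    (hut : ∀ x ∈ Icc (0:ℝ) l, ∀ t ∈ Ioc (0:ℝ) T,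
      HasDerivWithinAt (fun τ => u x τ) (ut x t) (Icc (0:ℝ) T) t)
    (hux : ∀ x ∈ Icc (0:ℝ) l, ∀ t ∈ Ioc (0:ℝ) T,
      HasDerivWithinAt (fun s => u s t) (ux x t) (Icc (0:ℝ) l) x)
    (huxx : ∀ x ∈ Icc (0:ℝ) l, ∀ t ∈ Ioc (0:ℝ) T,
      HasDerivWithinAt (fun s => ux s t) (uxx x t) (Icc (0:ℝ) l) x)
    (f : ℝ → ℝ → ℝ) (φ : ℝ → ℝ) (F Φ : ℝ) (hΦ0 : 0 ≤ Φ)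
    (hF : ∀ x ∈ Ioo (0:ℝ) l, ∀ t ∈ Ioc (0:ℝ) T, f x t ≤ F)
    (hφ : ∀ x ∈ Icc (0:ℝ) l, φ x ≤ Φ)
    (hLeq : ∀ x ∈ Icc (0:ℝ) l, ∀ t ∈ Ioc (0:ℝ) T,
      ut x t - (a x * uxx x t + a' x * ux x t) + q x * u x t = f x t)
    (hinit : ∀ x ∈ Icc (0:ℝ) l, u x 0 = φ x) :
    ∀ x ∈ Icc (0:ℝ) l, ∀ t ∈ Icc (0:ℝ) T, u x t ≤ max ((1/q₀) * F) Φ := by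
  obtain ⟨h, b1, b2, hhd, hb1d, hid, hh0, hhdiv⟩ :=
    barrier_exists l hl a a' ha ha'c ha0 hal hapos
  set K := max ((1/q₀) * F) Φ with hKdef
  have hK0 : 0 ≤ K := le_trans hΦ0 (le_max_right _ _)
  -- global max of u
  have hQc : IsCompact (Icc (0:ℝ) l ×ˢ Icc (0:ℝ) T) := isCompact_Icc.prod isCompact_Icc
  obtain ⟨pU, hpU, hUmax⟩ := hQc.exists_isMaxOn
    ⟨(0,0), ⟨⟨le_rfl, hl.le⟩, ⟨le_rfl, hT.le⟩⟩⟩ hu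
  set U := u pU.1 pU.2 with hUdef
  have hU : ∀ x ∈ Icc (0:ℝ) l, ∀ t ∈ Icc (0:ℝ) T, u x t ≤ U := by
    intro x hx t ht
    exact hUmax (⟨hx, ht⟩ : (x, t) ∈ Icc (0:ℝ) l ×ˢ Icc (0:ℝ) T)
  -- interior bound
  have hmain : ∀ x ∈ Ioo (0:ℝ) l, ∀ t ∈ Icc (0:ℝ) T, u x t ≤ K := by
    intro xb hxb tb htb
    have hxbIcc : xb ∈ Icc (0:ℝ) l := Ioo_subset_Icc_self hxb
    have hc : 0 < 1/q₀ + h xb := by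
      have := hh0 xb hxb
      have : (0:ℝ) < 1/q₀ := by positivity
      linarith [hh0 xb hxb]
    suffices hsuf : ∀ ε > 0, u xb tb ≤ K + ε * (1/q₀ + h xb) by
      refine le_of_forall_pos_le_add ?_
      intro η hη
      have := hsuf (η / (1/q₀ + h xb)) (by positivity)
      calc u xb tb ≤ K + (η/(1/q₀ + h xb)) * (1/q₀ + h xb) := this
      _ = K + η := by rw [div_mul_cancel₀]; exact ne_of_gt hc
    intro ε hε
    set C := (U + 1 - u xb tb)/ε + h xb with hCdef
    obtain ⟨δ, hδ0, hδlt, hδ2l, hleft, hright⟩ :=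
      hhdiv C (min xb (l - xb)) (lt_min hxb.1 (by linarith [hxb.2]))
    have hδxb : δ < xb := lt_of_lt_of_le hδlt (min_le_left _ _)
    have hδxb' : δ < l - xb := lt_of_lt_of_le hδlt (min_le_right _ _)
    have hδll : δ < l - δ := by linarith
    have hsubx : Icc δ (l-δ) ⊆ Icc 0 l := Icc_subset_Icc (by linarith) (by linarith)
    have hsubIoo : Icc δ (l-δ) ⊆ Ioo 0 l := Icc_subset_Ioo (by linarith) (by linarith)
    set R := Icc δ (l-δ) ×ˢ Icc (0:ℝ) T with hRdef
    set v : ℝ × ℝ → ℝ := fun p => u p.1 p.2 - ε * h p.1 with hvdef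
    have hhc : ContinuousOn h (Icc δ (l-δ)) :=
      fun y hy => ((hhd y (hsubIoo hy)).continuousAt).continuousWithinAt
    have hvc : ContinuousOn v R := by
      apply ContinuousOn.sub
      · exact hu.mono (prod_mono hsubx (subset_refl _))
      · apply ContinuousOn.mul continuousOn_const
        exact hhc.comp continuous_fst.continuousOn (fun p hp => hp.1)
    have hxbtbR : (xb, tb) ∈ R := ⟨⟨hδxb.le, by linarith⟩, htb⟩
    obtain ⟨p₀, hp₀R, hmax⟩ := (((isCompact_Icc).prod isCompact_Icc).exists_isMaxOn)
      ⟨(xb, tb), hxbtbR⟩ hvc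
    obtain ⟨x₀, t₀⟩ := p₀
    have hx₀ : x₀ ∈ Icc δ (l-δ) := hp₀R.1
    have ht₀ : t₀ ∈ Icc (0:ℝ) T := hp₀R.2
    have hvmax : ∀ p ∈ R, v p ≤ v (x₀, t₀) := fun p hp => hmax hp
    -- the sides are excluded
    have hside : ∀ y ∈ Icc δ (l-δ), ∀ t ∈ Icc (0:ℝ) T, (y ≤ δ ∨ l - δ ≤ y) →
        v (y, t) < v (xb, tb) := by
      intro y hy t ht hside
      have hyIoo : y ∈ Ioo (0:ℝ) l := hsubIoo hy
      have hCy : C ≤ h y := by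
        rcases hside with hc | hc
        · exact hleft y hyIoo hc
        · exact hright y hyIoo hc
      have hut' : u y t ≤ U := hU y (Ioo_subset_Icc_self hyIoo) t ht
      have : ε * C ≤ ε * h y := mul_le_mul_of_nonneg_left hCy hε.le
      have hεC : ε * C = U + 1 - u xb tb + ε * h xb := by
        rw [hCdef]; field_simp
      simp only [hvdef]
      have : v (y,t) = u y t - ε * h y := rfl
      show u y t - ε * h y < u xb tb - ε * h xb
      linarith
    have hx₀mem : x₀ ∈ Ioo δ (l-δ) := by
      rcases lt_or_eq_of_le hx₀.1 with h1 | h1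
      · rcases lt_or_eq_of_le hx₀.2 with h2 | h2
        · exact ⟨h1, h2⟩
        · exfalso
          have := hside x₀ hx₀ t₀ ht₀ (Or.inr h2.ge)
          have h2' := hvmax (xb, tb) hxbtbR
          linarith
      · exfalso
        have := hside x₀ hx₀ t₀ ht₀ (Or.inl h1.ge)
        have h2' := hvmax (xb, tb) hxbtbR
        linarith
    have hx₀Ioo : x₀ ∈ Ioo (0:ℝ) l := hsubIoo hx₀
    have hx₀Icc : x₀ ∈ Icc (0:ℝ) l := Ioo_subset_Icc_self hx₀Ioo
    -- bound the max value of v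
    have hKε : v (x₀, t₀) ≤ max ((1/q₀) * (F + ε)) Φ := by
      rcases eq_or_lt_of_le ht₀.1 with ht00 | ht0pos
      · -- t₀ = 0
        have : v (x₀, t₀) = u x₀ 0 - ε * h x₀ := by rw [← ht00]
        rw [this, hinit x₀ hx₀Icc]
        have := hφ x₀ hx₀Icc
        have := hh0 x₀ hx₀Ioo
        have : φ x₀ - ε * h x₀ ≤ Φ := by nlinarith
        exact le_trans this (le_max_right _ _)
      · -- t₀ > 0
        have ht₀Ioc : t₀ ∈ Ioc (0:ℝ) T := ⟨ht0pos, ht₀.2⟩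
        -- time derivative sign
        have h1 : 0 ≤ ut x₀ t₀ := by
          apply slope_left_nonneg (fun τ => u x₀ τ) (s := Icc (0:ℝ) T) ht0pos
            (fun y hy => ⟨hy.1.le, le_trans hy.2.le ht₀.2⟩)
            (hut x₀ hx₀Icc t₀ ht₀Ioc)
          intro y hy
          have := hvmax (x₀, y) ⟨hx₀, ⟨hy.1.le, le_trans hy.2.le ht₀.2⟩⟩
          simp only [hvdef] at this
          linarith
        -- space derivative of v vanishes
        have hvd : HasDerivWithinAt (fun s => u s t₀ - ε * h s)
            (ux x₀ t₀ - ε * b1 x₀) (Icc δ (l-δ)) x₀ :=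
          ((hux x₀ hx₀Icc t₀ ht₀Ioc).mono hsubx).sub
            (((hhd x₀ hx₀Ioo).const_mul ε).hasDerivWithinAt)
        have hvslice : ∀ y ∈ Icc δ (l-δ), u y t₀ - ε * h y ≤ u x₀ t₀ - ε * h x₀ := by
          intro y hy
          exact hvmax (y, t₀) ⟨hy, ht₀⟩
        have h2a : 0 ≤ ux x₀ t₀ - ε * b1 x₀ :=
          slope_left_nonneg _ (s := Icc δ (l-δ)) hx₀mem.1
            (fun y hy => ⟨hy.1.le, le_trans hy.2.le hx₀.2⟩) hvd
            (fun y hy => hvslice y ⟨hy.1.le, le_trans hy.2.le hx₀.2⟩)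
        have h2b : ux x₀ t₀ - ε * b1 x₀ ≤ 0 :=
          slope_right_nonpos _ (s := Icc δ (l-δ)) hx₀mem.2
            (fun y hy => ⟨le_trans hx₀.1 hy.1.le, hy.2.le⟩) hvd
            (fun y hy => hvslice y ⟨le_trans hx₀.1 hy.1.le, hy.2.le⟩)
        have h2 : ux x₀ t₀ = ε * b1 x₀ := by linarith
        -- second derivative test
        have h3 : uxx x₀ t₀ - ε * b2 x₀ ≤ 0 := by
          apply sd_test hx₀mem (φ := fun s => u s t₀ - ε * h s)
            (ψ := fun s => ux s t₀ - ε * b1 s)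
          · -- continuity
            apply ContinuousOn.sub
            · have : ContinuousOn (fun s : ℝ => ((s, t₀) : ℝ × ℝ)) (Icc δ (l-δ)) :=
                (continuous_id.prodMk continuous_const).continuousOn
              exact (hu.mono (prod_mono hsubx (subset_refl _))).comp this
                (fun s hs => ⟨hs, ht₀⟩)
            · exact continuousOn_const.mul hhc
          · intro x hx
            have hxIoo : x ∈ Ioo (0:ℝ) l := hsubIoo (Ioo_subset_Icc_self hx)
            have hxIcc : x ∈ Icc (0:ℝ) l := Ioo_subset_Icc_self hxIoo
            exact ((hux x hxIcc t₀ ht₀Ioc).hasDerivAt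
              (Icc_mem_nhds hxIoo.1 hxIoo.2)).sub ((hhd x hxIoo).const_mul ε)
          · linarith
          · exact ((huxx x₀ hx₀Icc t₀ ht₀Ioc).hasDerivAt
              (Icc_mem_nhds hx₀Ioo.1 hx₀Ioo.2)).sub ((hb1d x₀ hx₀Ioo).const_mul ε)
          · exact hvslice
        -- combine with the PDE
        have heq := hLeq x₀ hx₀Icc t₀ ht₀Ioc
        have hax₀ : 0 < a x₀ := hapos x₀ hx₀Ioo
        have hid₀ := hid x₀ hx₀Ioo
        have hfF := hF x₀ hx₀Ioo t₀ ht₀Ioc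
        have hqu : q x₀ * u x₀ t₀ ≤ F + ε := by
          have e1 : a x₀ * uxx x₀ t₀ ≤ a x₀ * (ε * b2 x₀) :=
            mul_le_mul_of_nonneg_left (by linarith) hax₀.le
          have e2 : a x₀ * uxx x₀ t₀ + a' x₀ * ux x₀ t₀ ≤ ε := by
            rw [h2]
            nlinarith [hid₀]
          linarith
        have hqx₀ : q₀ ≤ q x₀ := hq x₀ hx₀Icc
        have hqh : 0 ≤ q x₀ * (ε * h x₀) :=
          mul_nonneg (le_trans hq₀.le hqx₀) (mul_nonneg hε.le (hh0 x₀ hx₀Ioo))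
        have hqv : q x₀ * v (x₀, t₀) ≤ F + ε := by
          have : v (x₀, t₀) = u x₀ t₀ - ε * h x₀ := rfl
          rw [this, mul_sub]
          linarith
        rcases le_or_gt (v (x₀, t₀)) 0 with hv0 | hv0
        · exact le_trans (le_trans hv0 hΦ0) (le_max_right _ _)
        · have hq₀v : q₀ * v (x₀, t₀) ≤ F + ε :=
            le_trans (mul_le_mul_of_nonneg_right hqx₀ hv0.le) hqv
          have : v (x₀, t₀) ≤ (1/q₀) * (F + ε) := by
            rw [div_mul_eq_mul_div, le_div_iff₀ hq₀, one_mul] at *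
            linarith [hq₀v]
          exact le_trans this (le_max_left _ _)
    -- conclude
    have hfin : v (xb, tb) ≤ max ((1/q₀) * (F + ε)) Φ :=
      le_trans (hvmax (xb, tb) hxbtbR) hKε
    have hmaxle : max ((1/q₀) * (F + ε)) Φ ≤ K + ε * (1/q₀) := by
      apply max_le
      · have : (1/q₀) * (F + ε) = (1/q₀) * F + ε * (1/q₀) := by ring
        rw [this]
        linarith [(le_max_left _ _ : (1/q₀) * F ≤ K)]
      · have h1 : Φ ≤ K := le_max_right _ _
        have h2 : 0 ≤ ε * (1/q₀) := by positivity
        linarith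
    have hv : v (xb, tb) = u xb tb - ε * h xb := rfl
    have hdist : ε * (1/q₀ + h xb) = ε * (1/q₀) + ε * h xb := by ring
    linarith
  -- extend to the boundary in x
  intro x hx t ht
  rcases eq_or_lt_of_le hx.1 with hx0 | hx0
  · -- x = 0
    have hcw : ContinuousWithinAt (fun s => u s t) (Ioo 0 l) x := by
      have hcont : ContinuousOn (fun s => u s t) (Icc 0 l) := by
        have : ContinuousOn (fun s : ℝ => ((s, t) : ℝ × ℝ)) (Icc 0 l) :=
          (continuous_id.prodMk continuous_const).continuousOn
        exact hu.comp this (fun s hs => ⟨hs, ht⟩)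
      exact (hcont x hx).mono Ioo_subset_Icc_self
    have hne : (𝓝[Ioo (0:ℝ) l] x).NeBot := by
      apply mem_closure_iff_nhdsWithin_neBot.mp
      rw [closure_Ioo (ne_of_lt hl)]
      exact ⟨hx.1, hx.2⟩
    refine le_of_tendsto hcw ?_
    filter_upwards [self_mem_nhdsWithin] with y hy
    exact hmain y hy t ht
  · rcases eq_or_lt_of_le hx.2 with hxl | hxl
    · -- x = l
      have hcw : ContinuousWithinAt (fun s => u s t) (Ioo 0 l) x := by
        have hcont : ContinuousOn (fun s => u s t) (Icc 0 l) := by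
          have : ContinuousOn (fun s : ℝ => ((s, t) : ℝ × ℝ)) (Icc 0 l) :=
            (continuous_id.prodMk continuous_const).continuousOn
          exact hu.comp this (fun s hs => ⟨hs, ht⟩)
        exact (hcont x hx).mono Ioo_subset_Icc_self
      have hne : (𝓝[Ioo (0:ℝ) l] x).NeBot := by
        apply mem_closure_iff_nhdsWithin_neBot.mp
        rw [closure_Ioo (ne_of_lt hl)]
        exact ⟨hx.1, hx.2⟩
      refine le_of_tendsto hcw ?_
      filter_upwards [self_mem_nhdsWithin] with y hy
      exact hmain y hy t ht
    · exact hmain x ⟨hx0, hxl⟩ t ht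
/-- A priori sup-norm estimate (Theorem 2.4): if the admissible `u` solves `𝓛u = f` on
`[0,l] × (0,T]` with `u(·,0) = φ`, `f` bounded and `φ` bounded, then
`max_{Q̄} |u| ≤ max{(1/q₀)·sup_Q |f|, sup_{[0,l]} |φ|}`. -/
theorem sup_norm_estimate
    (l T q₀ : ℝ) (hl : 0 < l) (hT : 0 < T) (hq₀ : 0 < q₀)
    (a a' q : ℝ → ℝ)
    (ha : ∀ x ∈ Icc (0:ℝ) l, HasDerivWithinAt a (a' x) (Icc (0:ℝ) l) x)
    (ha'c : ContinuousOn a' (Icc (0:ℝ) l))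
    (ha0 : a 0 = 0) (hal : a l = 0)
    (hapos : ∀ x ∈ Ioo (0:ℝ) l, 0 < a x)
    (hqc : ContinuousOn q (Icc (0:ℝ) l))
    (hq : ∀ x ∈ Icc (0:ℝ) l, q₀ ≤ q x)
    (u ut ux uxx : ℝ → ℝ → ℝ)
    (hu : ContinuousOn (fun p : ℝ × ℝ => u p.1 p.2) (Icc (0:ℝ) l ×ˢ Icc (0:ℝ) T))
    (hut : ∀ x ∈ Icc (0:ℝ) l, ∀ t ∈ Ioc (0:ℝ) T,
      HasDerivWithinAt (fun τ => u x τ) (ut x t) (Icc (0:ℝ) T) t)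
    (hux : ∀ x ∈ Icc (0:ℝ) l, ∀ t ∈ Ioc (0:ℝ) T,
      HasDerivWithinAt (fun s => u s t) (ux x t) (Icc (0:ℝ) l) x)
    (huxx : ∀ x ∈ Icc (0:ℝ) l, ∀ t ∈ Ioc (0:ℝ) T,
      HasDerivWithinAt (fun s => ux s t) (uxx x t) (Icc (0:ℝ) l) x)
    (f : ℝ → ℝ → ℝ) (φ : ℝ → ℝ)
    (hfb : ∃ M, ∀ x ∈ Ioo (0:ℝ) l, ∀ t ∈ Ioc (0:ℝ) T, |f x t| ≤ M)
    (hφb : ∃ M, ∀ x ∈ Icc (0:ℝ) l, |φ x| ≤ M)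
    (hL : ∀ x ∈ Icc (0:ℝ) l, ∀ t ∈ Ioc (0:ℝ) T,
      ut x t - (a x * uxx x t + a' x * ux x t) + q x * u x t = f x t)
    (hinit : ∀ x ∈ Icc (0:ℝ) l, u x 0 = φ x) :
    ∀ x ∈ Icc (0:ℝ) l, ∀ t ∈ Icc (0:ℝ) T,
      |u x t| ≤ max ((1 / q₀) * sSup ((fun p : ℝ × ℝ => |f p.1 p.2|) '' (Ioo (0:ℝ) l ×ˢ Ioc (0:ℝ) T)))
        (sSup ((fun x => |φ x|) '' Icc (0:ℝ) l)) := by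
  set F := sSup ((fun p : ℝ × ℝ => |f p.1 p.2|) '' (Ioo (0:ℝ) l ×ˢ Ioc (0:ℝ) T)) with hFdef
  set Φ := sSup ((fun x => |φ x|) '' Icc (0:ℝ) l) with hΦdef
  obtain ⟨Mf, hMf⟩ := hfb
  obtain ⟨Mφ, hMφ⟩ := hφb
  have hFbdd : BddAbove ((fun p : ℝ × ℝ => |f p.1 p.2|) '' (Ioo (0:ℝ) l ×ˢ Ioc (0:ℝ) T)) := by
    refine ⟨Mf, ?_⟩
    rintro y ⟨p, hp, rfl⟩
    exact hMf p.1 hp.1 p.2 hp.2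
  have hΦbdd : BddAbove ((fun x => |φ x|) '' Icc (0:ℝ) l) := by
    refine ⟨Mφ, ?_⟩
    rintro y ⟨x, hx, rfl⟩
    exact hMφ x hx
  have hFabs : ∀ x ∈ Ioo (0:ℝ) l, ∀ t ∈ Ioc (0:ℝ) T, |f x t| ≤ F :=
    fun x hx t ht => le_csSup hFbdd ⟨(x, t), ⟨hx, ht⟩, rfl⟩
  have hΦabs : ∀ x ∈ Icc (0:ℝ) l, |φ x| ≤ Φ :=
    fun x hx => le_csSup hΦbdd ⟨x, hx, rfl⟩
  have hΦ0 : 0 ≤ Φ := le_trans (abs_nonneg _) (hΦabs 0 ⟨le_rfl, hl.le⟩)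
  have hup := aux_upper l T q₀ hl hT hq₀ a a' q ha ha'c ha0 hal hapos hq
    u ut ux uxx hu hut hux huxx f φ F Φ hΦ0
    (fun x hx t ht => le_trans (le_abs_self _) (hFabs x hx t ht))
    (fun x hx => le_trans (le_abs_self _) (hΦabs x hx)) hL hinit
  have hdown := aux_upper l T q₀ hl hT hq₀ a a' q ha ha'c ha0 hal hapos hq
    (fun x t => -(u x t)) (fun x t => -(ut x t)) (fun x t => -(ux x t))
    (fun x t => -(uxx x t)) hu.neg
    (fun x hx t ht => (hut x hx t ht).neg)
    (fun x hx t ht => (hux x hx t ht).neg)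
    (fun x hx t ht => (huxx x hx t ht).neg)
    (fun x t => -(f x t)) (fun x => -(φ x)) F Φ hΦ0
    (fun x hx t ht => le_trans (neg_le_abs _) (hFabs x hx t ht))
    (fun x hx => le_trans (neg_le_abs _) (hΦabs x hx))
    (by
      intro x hx t ht
      have := hL x hx t ht
      ring_nf
      ring_nf at this
      linarith)
    (fun x hx => by show -(u x 0) = -(φ x); rw [hinit x hx])
  intro x hx t ht
  rw [abs_le]
  constructor
  · have := hdown x hx t ht
    simp only [neg_le] at *
    linarith
  · exact hup x hx t ht
end

section
/- Uniqueness of classical solutions of the degenerate forward problem: Let f : Q → ℝ be bounded and φ : [0,l] → ℝ be bounded, and let u₁, u₂ both be admissible functions satisfying 𝓛u_i(x,t) = f(x,t) for every (x,t) ∈ [0,l] × (0,T] and u_i(x,0) = φ(x) for every x ∈ [0,l] (i = 1,2). Then u₁(x,t) = u₂(x,t) for every (x,t) ∈ Q̄. Note that no boundary condition is imposed at the degenerate boundaries x = 0 and x = l. -/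
open Set Filter Topology

/-- If `g` has a derivative within `Icc a b` at the right endpoint `b` and attains its
maximum over `Icc a b` at `b`, then the derivative is nonnegative. -/
lemma deriv_nonneg_of_max_right {g : ℝ → ℝ} {d a b : ℝ} (hab : a < b)
    (hd : HasDerivWithinAt g d (Icc a b) b) (hmax : ∀ y ∈ Icc a b, g y ≤ g b) : 0 ≤ d := by
  rw [hasDerivWithinAt_iff_tendsto_slope] at hd
  have hne : (𝓝[Icc a b \ {b}] b).NeBot := by
    have : Ico a b ⊆ Icc a b \ {b} := fun y hy => ⟨⟨hy.1, le_of_lt hy.2⟩, ne_of_lt hy.2⟩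
    exact Filter.neBot_of_le (hf := right_nhdsWithin_Ico_neBot hab) (nhdsWithin_mono b this)
  refine ge_of_tendsto hd ?_
  filter_upwards [self_mem_nhdsWithin] with y hy
  have hyb : y < b := lt_of_le_of_ne hy.1.2 hy.2
  have h1 : g y - g b ≤ 0 := sub_nonpos.2 (hmax y hy.1)
  have h2 : y - b < 0 := sub_neg.2 hyb
  simpa [slope_def_field, div_eq_mul_inv] using div_nonneg_of_nonpos h1 h2.le

/-- If `g` has a derivative within `Icc a b` at the left endpoint `a` and attains its
maximum over `Icc a b` at `a`, then the derivative is nonpositive. -/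
lemma deriv_nonpos_of_max_left {g : ℝ → ℝ} {d a b : ℝ} (hab : a < b)
    (hd : HasDerivWithinAt g d (Icc a b) a) (hmax : ∀ y ∈ Icc a b, g y ≤ g a) : d ≤ 0 := by
  rw [hasDerivWithinAt_iff_tendsto_slope] at hd
  have hne : (𝓝[Icc a b \ {a}] a).NeBot := by
    have : Ioc a b ⊆ Icc a b \ {a} := fun y hy => ⟨⟨hy.1.le, hy.2⟩, ne_of_gt hy.1⟩
    exact Filter.neBot_of_le (hf := left_nhdsWithin_Ioc_neBot hab) (nhdsWithin_mono a this)
  refine le_of_tendsto hd ?_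
  filter_upwards [self_mem_nhdsWithin] with y hy
  have hya : a < y := lt_of_le_of_ne hy.1.1 (Ne.symm hy.2)
  have h1 : g y - g a ≤ 0 := sub_nonpos.2 (hmax y hy.1)
  have h2 : 0 < y - a := sub_pos.2 hya
  have := div_nonpos_of_nonpos_of_nonneg h1 h2.le
  simpa [slope_def_field, div_eq_mul_inv] using this

/-- Second derivative test at an interior maximum. -/
lemma second_deriv_nonpos_of_interior_max {g g' : ℝ → ℝ} {g'' a b x₀ : ℝ}
    (hx : x₀ ∈ Ioo a b)
    (hg : ∀ x ∈ Icc a b, HasDerivWithinAt g (g' x) (Icc a b) x)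
    (hg'' : HasDerivWithinAt g' g'' (Icc a b) x₀)
    (hmax : ∀ y ∈ Icc a b, g y ≤ g x₀) : g'' ≤ 0 := by
  have hxI : x₀ ∈ Icc a b := Ioo_subset_Icc_self hx
  have hIcc_nhds : Icc a b ∈ 𝓝 x₀ := Icc_mem_nhds hx.1 hx.2
  have hda : HasDerivAt g (g' x₀) x₀ := (hg x₀ hxI).hasDerivAt hIcc_nhds
  have hlm : IsLocalMax g x₀ := by
    filter_upwards [hIcc_nhds] with y hy using hmax y hy
  have hg'0 : g' x₀ = 0 := hlm.hasDerivAt_eq_zero hda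
  by_contra h
  push_neg at h
  rw [hasDerivWithinAt_iff_tendsto_slope] at hg''
  have hev : ∀ᶠ y in 𝓝[Icc a b \ {x₀}] x₀, 0 < slope g' x₀ y :=
    hg''.eventually (eventually_gt_nhds h)
  rw [eventually_nhdsWithin_iff] at hev
  rcases Metric.eventually_nhds_iff.1 hev with ⟨δ, hδ, hδslope⟩
  set c : ℝ := min (x₀ + δ / 2) ((x₀ + b) / 2) with hc
  have hx₀c : x₀ < c := lt_min (by linarith) (by linarith [hx.2])
  have hcb : c < b := lt_of_le_of_lt (min_le_right _ _) (by linarith [hx.2])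
  have hsub : Ioc x₀ c ⊆ Icc a b := fun y hy =>
    ⟨le_of_lt (lt_of_lt_of_le hx.1 hy.1.le), hy.2.trans hcb.le⟩
  have hg'pos : ∀ y ∈ Ioc x₀ c, 0 < g' y := by
    intro y hy
    have hdist : dist y x₀ < δ := by
      rw [Real.dist_eq, abs_of_pos (sub_pos.2 hy.1)]
      have : y ≤ x₀ + δ / 2 := hy.2.trans (min_le_left _ _)
      linarith
    have hslope := hδslope hdist ⟨hsub hy, ne_of_gt hy.1⟩
    rw [slope_def_field, hg'0, sub_zero] at hslope
    have hypos : 0 < y - x₀ := sub_pos.2 hy.1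
    have := mul_pos hslope hypos
    rw [div_mul_cancel₀] at this
    · exact this
    · exact ne_of_gt hypos
  -- g is strictly monotone on [x₀, c]
  have hcont : ContinuousOn g (Icc x₀ c) := fun y hy =>
    ((hg y ⟨(hx.1.le.trans hy.1), hy.2.trans hcb.le⟩).continuousWithinAt).mono
      (fun z hz => ⟨hx.1.le.trans hz.1, hz.2.trans hcb.le⟩)
  have hmono : StrictMonoOn g (Icc x₀ c) := by
    apply strictMonoOn_of_deriv_pos (convex_Icc _ _) hcont
    intro y hy
    rw [interior_Icc] at hy
    have hyI : y ∈ Icc a b := hsub ⟨hy.1, hy.2.le⟩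
    have : HasDerivAt g (g' y) y :=
      (hg y hyI).hasDerivAt (Icc_mem_nhds (hx.1.trans hy.1) (hy.2.trans hcb))
    rw [this.deriv]
    exact hg'pos y ⟨hy.1, hy.2.le⟩
  have := hmono (left_mem_Icc.2 hx₀c.le) (right_mem_Icc.2 hx₀c.le) hx₀c
  exact absurd (hmax c (hsub ⟨hx₀c, le_refl c⟩)) (not_le.2 this)

/-- Maximum principle for the degenerate operator: a solution of `𝓛w = 0` with zero
initial data is nonpositive on the closed rectangle. -/
lemma degenerate_max_principle
    (l T q₀ : ℝ) (hl : 0 < l) (hT : 0 < T) (hq₀ : 0 < q₀)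
    (a a' q : ℝ → ℝ)
    (ha : ∀ x ∈ Icc (0:ℝ) l, HasDerivWithinAt a (a' x) (Icc (0:ℝ) l) x)
    (ha0 : a 0 = 0) (hal : a l = 0)
    (hapos : ∀ x ∈ Ioo (0:ℝ) l, 0 < a x)
    (hq : ∀ x ∈ Icc (0:ℝ) l, q₀ ≤ q x)
    (w wt wx wxx : ℝ → ℝ → ℝ)
    (hw : ContinuousOn (fun p : ℝ × ℝ => w p.1 p.2) (Icc (0:ℝ) l ×ˢ Icc (0:ℝ) T))
    (hwt : ∀ x ∈ Icc (0:ℝ) l, ∀ t ∈ Ioc (0:ℝ) T,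
      HasDerivWithinAt (fun τ => w x τ) (wt x t) (Icc (0:ℝ) T) t)
    (hwx : ∀ x ∈ Icc (0:ℝ) l, ∀ t ∈ Ioc (0:ℝ) T,
      HasDerivWithinAt (fun s => w s t) (wx x t) (Icc (0:ℝ) l) x)
    (hwxx : ∀ x ∈ Icc (0:ℝ) l, ∀ t ∈ Ioc (0:ℝ) T,
      HasDerivWithinAt (fun s => wx s t) (wxx x t) (Icc (0:ℝ) l) x)
    (hLw : ∀ x ∈ Icc (0:ℝ) l, ∀ t ∈ Ioc (0:ℝ) T,
      wt x t - (a x * wxx x t + a' x * wx x t) + q x * w x t = 0)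
    (hw0 : ∀ x ∈ Icc (0:ℝ) l, w x 0 = 0) :
    ∀ x ∈ Icc (0:ℝ) l, ∀ t ∈ Icc (0:ℝ) T, w x t ≤ 0 := by
  -- the rectangle is compact and nonempty
  have hK : IsCompact (Icc (0:ℝ) l ×ˢ Icc (0:ℝ) T) := (isCompact_Icc).prod isCompact_Icc
  have hKne : (Icc (0:ℝ) l ×ˢ Icc (0:ℝ) T).Nonempty :=
    ⟨(0, 0), ⟨left_mem_Icc.2 hl.le, left_mem_Icc.2 hT.le⟩⟩
  obtain ⟨p₀, hp₀K, hp₀max⟩ := hK.exists_isMaxOn hKne hw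
  obtain ⟨x₀, t₀⟩ := p₀
  obtain ⟨hx₀ : x₀ ∈ Icc (0:ℝ) l, ht₀ : t₀ ∈ Icc (0:ℝ) T⟩ := hp₀K
  have hmax : ∀ x ∈ Icc (0:ℝ) l, ∀ t ∈ Icc (0:ℝ) T, w x t ≤ w x₀ t₀ := by
    intro x hx t ht
    exact hp₀max (Set.mk_mem_prod hx ht)
  -- suffices to show the max value is nonpositive
  suffices hM0 : w x₀ t₀ ≤ 0 by
    intro x hx t ht; exact (hmax x hx t ht).trans hM0
  by_contra hMpos
  push_neg at hMpos
  -- `t₀ > 0` since `w = 0` at `t = 0`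
  have ht₀pos : 0 < t₀ := by
    rcases lt_or_eq_of_le ht₀.1 with h | h
    · exact h
    · exfalso; rw [← h, hw0 x₀ hx₀] at hMpos; exact lt_irrefl 0 hMpos
  have ht₀Ioc : t₀ ∈ Ioc (0:ℝ) T := ⟨ht₀pos, ht₀.2⟩
  -- the time derivative is nonnegative at the max
  have hwt0 : 0 ≤ wt x₀ t₀ := by
    apply deriv_nonneg_of_max_right (a := 0) ht₀pos
      ((hwt x₀ hx₀ t₀ ht₀Ioc).mono (Icc_subset_Icc le_rfl ht₀.2))
    intro τ hτ
    exact hmax x₀ hx₀ τ ⟨hτ.1, hτ.2.trans ht₀.2⟩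
  -- the spatial part is nonpositive at the max
  have hspace : a x₀ * wxx x₀ t₀ + a' x₀ * wx x₀ t₀ ≤ 0 := by
    have hmaxx : ∀ y ∈ Icc (0:ℝ) l, w y t₀ ≤ w x₀ t₀ := fun y hy => hmax y hy t₀ ht₀
    rcases eq_or_lt_of_le hx₀.1 with h0 | h0
    · -- x₀ = 0
      obtain rfl : (0:ℝ) = x₀ := h0
      have hwx0 : wx 0 t₀ ≤ 0 :=
        deriv_nonpos_of_max_left hl (hwx 0 hx₀ t₀ ht₀Ioc) hmaxx
      have ha'0 : 0 ≤ a' 0 := by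
        have := deriv_nonpos_of_max_left hl ((ha 0 hx₀).neg) (fun y hy => by
          simp only [Pi.neg_apply, neg_le_neg_iff]
          rcases eq_or_lt_of_le hy.1 with h | h
          · rw [← h]
          · rcases eq_or_lt_of_le hy.2 with h' | h'
            · rw [h', hal, ha0]
            · rw [ha0]; exact (hapos y ⟨h, h'⟩).le)
        linarith
      rw [ha0]
      nlinarith
    rcases eq_or_lt_of_le hx₀.2 with hl0 | hl0
    · -- x₀ = l
      have hlmem : l ∈ Icc (0:ℝ) l := right_mem_Icc.2 hl.le
      have hmaxx' : ∀ y ∈ Icc (0:ℝ) l, w y t₀ ≤ w l t₀ := fun y hy => by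
        rw [← hl0]; exact hmaxx y hy
      have hwxl : 0 ≤ wx l t₀ :=
        deriv_nonneg_of_max_right (a := 0) hl (hwx l hlmem t₀ ht₀Ioc) hmaxx'
      have ha'l : a' l ≤ 0 := by
        have := deriv_nonneg_of_max_right (a := 0) hl ((ha l hlmem).neg) (fun y hy => by
          simp only [Pi.neg_apply, neg_le_neg_iff]
          rcases eq_or_lt_of_le hy.1 with h | h
          · rw [← h, ha0, hal]
          · rcases eq_or_lt_of_le hy.2 with h' | h'
            · rw [h']
            · rw [hal]; exact (hapos y ⟨h, h'⟩).le)
        linarith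
      rw [hl0, hal]
      nlinarith
    · -- interior point
      have hxIoo : x₀ ∈ Ioo (0:ℝ) l := ⟨h0, hl0⟩
      have hwx0 : wx x₀ t₀ = 0 := by
        have hda : HasDerivAt (fun s => w s t₀) (wx x₀ t₀) x₀ :=
          (hwx x₀ hx₀ t₀ ht₀Ioc).hasDerivAt (Icc_mem_nhds h0 hl0)
        have hlm : IsLocalMax (fun s => w s t₀) x₀ := by
          filter_upwards [Icc_mem_nhds h0 hl0] with y hy using hmaxx y hy
        exact hlm.hasDerivAt_eq_zero hda
      have hwxx0 : wxx x₀ t₀ ≤ 0 :=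
        second_deriv_nonpos_of_interior_max hxIoo
          (fun x hx => hwx x hx t₀ ht₀Ioc) (hwxx x₀ hx₀ t₀ ht₀Ioc) hmaxx
      have hax : 0 < a x₀ := hapos x₀ hxIoo
      rw [hwx0, mul_zero, add_zero]
      nlinarith [mul_nonneg hax.le (neg_nonneg.2 hwxx0)]
  -- contradiction with the equation
  have heq := hLw x₀ hx₀ t₀ ht₀Ioc
  have hqM : q₀ * w x₀ t₀ ≤ q x₀ * w x₀ t₀ :=
    mul_le_mul_of_nonneg_right (hq x₀ hx₀) hMpos.le
  nlinarith [mul_pos hq₀ hMpos]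

/-- Uniqueness of classical solutions of the degenerate forward problem: two admissible
solutions of `𝓛u = f` on `[0,l] × (0,T]` with the same initial data `φ` coincide on `Q̄`;
no boundary condition is imposed at the degenerate boundaries `x = 0` and `x = l`. -/
theorem uniqueness_degenerate_forward_problem
    (l T q₀ : ℝ) (hl : 0 < l) (hT : 0 < T) (hq₀ : 0 < q₀)
    (a a' q : ℝ → ℝ)
    (ha : ∀ x ∈ Icc (0:ℝ) l, HasDerivWithinAt a (a' x) (Icc (0:ℝ) l) x)
    (ha'c : ContinuousOn a' (Icc (0:ℝ) l))
    (ha0 : a 0 = 0) (hal : a l = 0)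
    (hapos : ∀ x ∈ Ioo (0:ℝ) l, 0 < a x)
    (hqc : ContinuousOn q (Icc (0:ℝ) l))
    (hq : ∀ x ∈ Icc (0:ℝ) l, q₀ ≤ q x)
    (f : ℝ → ℝ → ℝ) (φ : ℝ → ℝ)
    (hfb : ∃ M, ∀ x ∈ Ioo (0:ℝ) l, ∀ t ∈ Ioc (0:ℝ) T, |f x t| ≤ M)
    (hφb : ∃ M, ∀ x ∈ Icc (0:ℝ) l, |φ x| ≤ M)
    (u₁ u₁t u₁x u₁xx u₂ u₂t u₂x u₂xx : ℝ → ℝ → ℝ)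
    (hu₁ : ContinuousOn (fun p : ℝ × ℝ => u₁ p.1 p.2) (Icc (0:ℝ) l ×ˢ Icc (0:ℝ) T))
    (hu₁t : ∀ x ∈ Icc (0:ℝ) l, ∀ t ∈ Ioc (0:ℝ) T,
      HasDerivWithinAt (fun τ => u₁ x τ) (u₁t x t) (Icc (0:ℝ) T) t)
    (hu₁x : ∀ x ∈ Icc (0:ℝ) l, ∀ t ∈ Ioc (0:ℝ) T,
      HasDerivWithinAt (fun s => u₁ s t) (u₁x x t) (Icc (0:ℝ) l) x)
    (hu₁xx : ∀ x ∈ Icc (0:ℝ) l, ∀ t ∈ Ioc (0:ℝ) T,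
      HasDerivWithinAt (fun s => u₁x s t) (u₁xx x t) (Icc (0:ℝ) l) x)
    (hu₂ : ContinuousOn (fun p : ℝ × ℝ => u₂ p.1 p.2) (Icc (0:ℝ) l ×ˢ Icc (0:ℝ) T))
    (hu₂t : ∀ x ∈ Icc (0:ℝ) l, ∀ t ∈ Ioc (0:ℝ) T,
      HasDerivWithinAt (fun τ => u₂ x τ) (u₂t x t) (Icc (0:ℝ) T) t)
    (hu₂x : ∀ x ∈ Icc (0:ℝ) l, ∀ t ∈ Ioc (0:ℝ) T,
      HasDerivWithinAt (fun s => u₂ s t) (u₂x x t) (Icc (0:ℝ) l) x)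
    (hu₂xx : ∀ x ∈ Icc (0:ℝ) l, ∀ t ∈ Ioc (0:ℝ) T,
      HasDerivWithinAt (fun s => u₂x s t) (u₂xx x t) (Icc (0:ℝ) l) x)
    (hL₁ : ∀ x ∈ Icc (0:ℝ) l, ∀ t ∈ Ioc (0:ℝ) T,
      u₁t x t - (a x * u₁xx x t + a' x * u₁x x t) + q x * u₁ x t = f x t)
    (hL₂ : ∀ x ∈ Icc (0:ℝ) l, ∀ t ∈ Ioc (0:ℝ) T,
      u₂t x t - (a x * u₂xx x t + a' x * u₂x x t) + q x * u₂ x t = f x t)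
    (hinit₁ : ∀ x ∈ Icc (0:ℝ) l, u₁ x 0 = φ x)
    (hinit₂ : ∀ x ∈ Icc (0:ℝ) l, u₂ x 0 = φ x) :
    ∀ x ∈ Icc (0:ℝ) l, ∀ t ∈ Icc (0:ℝ) T, u₁ x t = u₂ x t := by
  have key : ∀ v₁ v₁t v₁x v₁xx v₂ v₂t v₂x v₂xx : ℝ → ℝ → ℝ,
      ContinuousOn (fun p : ℝ × ℝ => v₁ p.1 p.2) (Icc (0:ℝ) l ×ˢ Icc (0:ℝ) T) →
      (∀ x ∈ Icc (0:ℝ) l, ∀ t ∈ Ioc (0:ℝ) T,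
        HasDerivWithinAt (fun τ => v₁ x τ) (v₁t x t) (Icc (0:ℝ) T) t) →
      (∀ x ∈ Icc (0:ℝ) l, ∀ t ∈ Ioc (0:ℝ) T,
        HasDerivWithinAt (fun s => v₁ s t) (v₁x x t) (Icc (0:ℝ) l) x) →
      (∀ x ∈ Icc (0:ℝ) l, ∀ t ∈ Ioc (0:ℝ) T,
        HasDerivWithinAt (fun s => v₁x s t) (v₁xx x t) (Icc (0:ℝ) l) x) →
      ContinuousOn (fun p : ℝ × ℝ => v₂ p.1 p.2) (Icc (0:ℝ) l ×ˢ Icc (0:ℝ) T) →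
      (∀ x ∈ Icc (0:ℝ) l, ∀ t ∈ Ioc (0:ℝ) T,
        HasDerivWithinAt (fun τ => v₂ x τ) (v₂t x t) (Icc (0:ℝ) T) t) →
      (∀ x ∈ Icc (0:ℝ) l, ∀ t ∈ Ioc (0:ℝ) T,
        HasDerivWithinAt (fun s => v₂ s t) (v₂x x t) (Icc (0:ℝ) l) x) →
      (∀ x ∈ Icc (0:ℝ) l, ∀ t ∈ Ioc (0:ℝ) T,
        HasDerivWithinAt (fun s => v₂x s t) (v₂xx x t) (Icc (0:ℝ) l) x) →
      (∀ x ∈ Icc (0:ℝ) l, ∀ t ∈ Ioc (0:ℝ) T,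
        v₁t x t - (a x * v₁xx x t + a' x * v₁x x t) + q x * v₁ x t = f x t) →
      (∀ x ∈ Icc (0:ℝ) l, ∀ t ∈ Ioc (0:ℝ) T,
        v₂t x t - (a x * v₂xx x t + a' x * v₂x x t) + q x * v₂ x t = f x t) →
      (∀ x ∈ Icc (0:ℝ) l, v₁ x 0 = φ x) → (∀ x ∈ Icc (0:ℝ) l, v₂ x 0 = φ x) →
      ∀ x ∈ Icc (0:ℝ) l, ∀ t ∈ Icc (0:ℝ) T, v₁ x t - v₂ x t ≤ 0 := by
    intro v₁ v₁t v₁x v₁xx v₂ v₂t v₂x v₂xx hv₁ hv₁t hv₁x hv₁xx hv₂ hv₂t hv₂x hv₂xx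
      hLv₁ hLv₂ hiv₁ hiv₂
    exact degenerate_max_principle l T q₀ hl hT hq₀ a a' q ha ha0 hal hapos hq
      (fun x t => v₁ x t - v₂ x t) (fun x t => v₁t x t - v₂t x t)
      (fun x t => v₁x x t - v₂x x t) (fun x t => v₁xx x t - v₂xx x t)
      (hv₁.sub hv₂)
      (fun x hx t ht => (hv₁t x hx t ht).sub (hv₂t x hx t ht))
      (fun x hx t ht => (hv₁x x hx t ht).sub (hv₂x x hx t ht))
      (fun x hx t ht => (hv₁xx x hx t ht).sub (hv₂xx x hx t ht))
      (fun x hx t ht => by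
        have h1 := hLv₁ x hx t ht
        have h2 := hLv₂ x hx t ht
        ring_nf
        ring_nf at h1 h2
        linarith)
      (fun x hx => by show v₁ x 0 - v₂ x 0 = 0; rw [hiv₁ x hx, hiv₂ x hx, sub_self])
  intro x hx t ht
  have h1 := key u₁ u₁t u₁x u₁xx u₂ u₂t u₂x u₂xx hu₁ hu₁t hu₁x hu₁xx hu₂ hu₂t hu₂x hu₂xx
    hL₁ hL₂ hinit₁ hinit₂ x hx t ht
  have h2 := key u₂ u₂t u₂x u₂xx u₁ u₁t u₁x u₁xx hu₂ hu₂t hu₂x hu₂xx hu₁ hu₁t hu₁x hu₁xx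
    hL₂ hL₁ hinit₂ hinit₁ x hx t ht
  linarith
end

section
/- Preservation of nonnegativity and boundedness (estimate 0 ≤ u ≤ ‖φ‖_∞ of Section 2): Let φ : [0,l] → ℝ be bounded with φ(x) ≥ 0 for all x ∈ [0,l], and let u be an admissible function satisfying the homogeneous equation 𝓛u(x,t) = 0 for every (x,t) ∈ [0,l] × (0,T] and u(x,0) = φ(x) for every x ∈ [0,l]. Then 0 ≤ u(x,t) ≤ sup_{[0,l]} φ for every (x,t) ∈ Q̄. -/
open Set Filter Topology

private lemma deriv_nonpos_of_min_left (f : ℝ → ℝ) (f' : ℝ) (s : Set ℝ) (c A : ℝ)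
    (hd : HasDerivWithinAt f f' s c) (hsub : Ioo A c ⊆ s) (hA : A < c)
    (hmin : ∀ y ∈ s, f c ≤ f y) : f' ≤ 0 := by
  rw [hasDerivWithinAt_iff_tendsto_slope] at hd
  have hcl : c ∈ closure (Ioo A c) := by
    rw [closure_Ioo hA.ne]; exact ⟨hA.le, le_rfl⟩
  have hne : (𝓝[Ioo A c] c).NeBot := mem_closure_iff_nhdsWithin_neBot.mp hcl
  have hsub' : Ioo A c ⊆ s \ {c} := fun y hy => ⟨hsub hy, by simp [hy.2.ne]⟩
  have hd' := hd.mono_left (nhdsWithin_mono c hsub')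
  refine le_of_tendsto hd' (eventually_of_mem self_mem_nhdsWithin fun y hy => ?_)
  show slope f c y ≤ 0
  rw [slope_def_field]
  exact div_nonpos_of_nonneg_of_nonpos (sub_nonneg.mpr (hmin y (hsub hy)))
    (sub_nonpos.mpr hy.2.le)

private lemma deriv_nonneg_of_min_right (f : ℝ → ℝ) (f' : ℝ) (s : Set ℝ) (c B : ℝ)
    (hd : HasDerivWithinAt f f' s c) (hsub : Ioo c B ⊆ s) (hB : c < B)
    (hmin : ∀ y ∈ s, f c ≤ f y) : 0 ≤ f' := by
  rw [hasDerivWithinAt_iff_tendsto_slope] at hd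
  have hcl : c ∈ closure (Ioo c B) := by
    rw [closure_Ioo hB.ne]; exact ⟨le_rfl, hB.le⟩
  have hne : (𝓝[Ioo c B] c).NeBot := mem_closure_iff_nhdsWithin_neBot.mp hcl
  have hsub' : Ioo c B ⊆ s \ {c} := fun y hy => ⟨hsub hy, by simp [hy.1.ne']⟩
  have hd' := hd.mono_left (nhdsWithin_mono c hsub')
  refine ge_of_tendsto hd' (eventually_of_mem self_mem_nhdsWithin fun y hy => ?_)
  show 0 ≤ slope f c y
  rw [slope_def_field]
  exact div_nonneg (sub_nonneg.mpr (hmin y (hsub hy))) (sub_nonneg.mpr hy.1.le)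

private lemma nonneg_of_supersol (l T q₀ : ℝ) (hl : 0 < l) (hT : 0 < T) (hq₀ : 0 < q₀)
    (a a' q : ℝ → ℝ)
    (ha : ∀ x ∈ Icc (0:ℝ) l, HasDerivWithinAt a (a' x) (Icc (0:ℝ) l) x)
    (ha0 : a 0 = 0) (hal : a l = 0)
    (hapos : ∀ x ∈ Ioo (0:ℝ) l, 0 < a x)
    (hq : ∀ x ∈ Icc (0:ℝ) l, q₀ ≤ q x)
    (w wt wx wxx : ℝ → ℝ → ℝ)
    (hw : ContinuousOn (fun p : ℝ × ℝ => w p.1 p.2) (Icc (0:ℝ) l ×ˢ Icc (0:ℝ) T))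
    (hwt : ∀ x ∈ Icc (0:ℝ) l, ∀ t ∈ Ioc (0:ℝ) T,
      HasDerivWithinAt (fun τ => w x τ) (wt x t) (Icc (0:ℝ) T) t)
    (hwx : ∀ x ∈ Icc (0:ℝ) l, ∀ t ∈ Ioc (0:ℝ) T,
      HasDerivWithinAt (fun s => w s t) (wx x t) (Icc (0:ℝ) l) x)
    (hwxx : ∀ x ∈ Icc (0:ℝ) l, ∀ t ∈ Ioc (0:ℝ) T,
      HasDerivWithinAt (fun s => wx s t) (wxx x t) (Icc (0:ℝ) l) x)
    (hLw : ∀ x ∈ Icc (0:ℝ) l, ∀ t ∈ Ioc (0:ℝ) T,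
      0 ≤ wt x t - (a x * wxx x t + a' x * wx x t) + q x * w x t)
    (hw0 : ∀ x ∈ Icc (0:ℝ) l, 0 ≤ w x 0) :
    ∀ x ∈ Icc (0:ℝ) l, ∀ t ∈ Icc (0:ℝ) T, 0 ≤ w x t := by
  have hK : IsCompact (Icc (0:ℝ) l ×ˢ Icc (0:ℝ) T) := isCompact_Icc.prod isCompact_Icc
  have hKne : (Icc (0:ℝ) l ×ˢ Icc (0:ℝ) T).Nonempty :=
    ⟨(0, 0), Set.mem_prod.mpr ⟨⟨le_rfl, hl.le⟩, ⟨le_rfl, hT.le⟩⟩⟩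
  obtain ⟨p, hp, hmin⟩ := hK.exists_isMinOn hKne hw
  obtain ⟨x₀, t₀⟩ := p
  obtain ⟨hx₀, ht₀⟩ := Set.mem_prod.mp hp
  have hminle : ∀ y ∈ Icc (0:ℝ) l, ∀ τ ∈ Icc (0:ℝ) T, w x₀ t₀ ≤ w y τ :=
    fun y hy τ hτ => hmin (Set.mk_mem_prod hy hτ)
  suffices h0 : 0 ≤ w x₀ t₀ by
    intro x hx t ht; exact h0.trans (hminle x hx t ht)
  by_contra hneg
  push_neg at hneg
  -- t₀ > 0
  have ht₀0 : 0 < t₀ := by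
    rcases ht₀.1.eq_or_lt with h | h
    · exact absurd (h ▸ hw0 x₀ hx₀) (not_le.mpr hneg)
    · exact h
  have ht₀T : t₀ ∈ Ioc (0:ℝ) T := ⟨ht₀0, ht₀.2⟩
  -- time derivative is nonpositive at the minimum
  have hwt0 : wt x₀ t₀ ≤ 0 :=
    deriv_nonpos_of_min_left (fun τ => w x₀ τ) _ _ t₀ 0 (hwt x₀ hx₀ t₀ ht₀T)
      (fun y hy => ⟨hy.1.le, hy.2.le.trans ht₀.2⟩) ht₀0
      (fun y hy => hminle x₀ hx₀ y hy)
  -- a is nonnegative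
  have hann : ∀ y ∈ Icc (0:ℝ) l, 0 ≤ a y := by
    intro y hy
    rcases hy.1.eq_or_lt with h | h
    · rw [← h, ha0]
    · rcases hy.2.eq_or_lt with h2 | h2
      · rw [h2, hal]
      · exact (hapos y ⟨h, h2⟩).le
  have hminx : ∀ y ∈ Icc (0:ℝ) l, w x₀ t₀ ≤ w y t₀ :=
    fun y hy => hminle y hy t₀ ⟨ht₀0.le, ht₀.2⟩
  -- the spatial term is nonnegative at the minimum
  have hA : 0 ≤ a x₀ * wxx x₀ t₀ + a' x₀ * wx x₀ t₀ := by
    rcases hx₀.1.eq_or_lt with h0 | h0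
    · -- x₀ = 0
      have hx0 : x₀ = 0 := h0.symm
      subst hx0
      have hwx0 : 0 ≤ wx 0 t₀ :=
        deriv_nonneg_of_min_right (fun s => w s t₀) _ _ 0 l (hwx 0 hx₀ t₀ ht₀T)
          Ioo_subset_Icc_self hl hminx
      have ha'0 : 0 ≤ a' 0 :=
        deriv_nonneg_of_min_right a _ _ 0 l (ha 0 hx₀) Ioo_subset_Icc_self hl
          (fun y hy => by rw [ha0]; exact hann y hy)
      rw [ha0, zero_mul, zero_add]
      exact mul_nonneg ha'0 hwx0
    rcases hx₀.2.eq_or_lt with hL' | hlt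
    · -- x₀ = l
      subst hL'
      have hwxle : wx x₀ t₀ ≤ 0 :=
        deriv_nonpos_of_min_left (fun s => w s t₀) _ _ x₀ 0 (hwx x₀ hx₀ t₀ ht₀T)
          Ioo_subset_Icc_self h0 hminx
      have ha'l : a' x₀ ≤ 0 :=
        deriv_nonpos_of_min_left a _ _ x₀ 0 (ha x₀ hx₀) Ioo_subset_Icc_self h0
          (fun y hy => by rw [hal]; exact hann y hy)
      rw [hal, zero_mul, zero_add]
      nlinarith [mul_nonneg (neg_nonneg.mpr ha'l) (neg_nonneg.mpr hwxle)]
    · -- interior point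
      have hd := hwx x₀ hx₀ t₀ ht₀T
      have hwxle : wx x₀ t₀ ≤ 0 :=
        deriv_nonpos_of_min_left (fun s => w s t₀) _ _ x₀ 0 hd
          (fun y hy => ⟨hy.1.le, hy.2.le.trans hlt.le⟩) h0 hminx
      have hwxge : 0 ≤ wx x₀ t₀ :=
        deriv_nonneg_of_min_right (fun s => w s t₀) _ _ x₀ l hd
          (fun y hy => ⟨h0.le.trans hy.1.le, hy.2.le⟩) hlt hminx
      have hwx0 : wx x₀ t₀ = 0 := le_antisymm hwxle hwxge
      have hwxx0 : 0 ≤ wxx x₀ t₀ := by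
        by_contra hc
        push_neg at hc
        have hd2 := hwxx x₀ hx₀ t₀ ht₀T
        rw [hasDerivWithinAt_iff_tendsto_slope] at hd2
        have hsub' : Ioo x₀ l ⊆ Icc (0:ℝ) l \ {x₀} :=
          fun y hy => ⟨⟨h0.le.trans hy.1.le, hy.2.le⟩, by simp [hy.1.ne']⟩
        have hd2' := hd2.mono_left (nhdsWithin_mono x₀ (hsub' : _))
        have hev : ∀ᶠ s in 𝓝[Ioo x₀ l] x₀,
            slope (fun s => wx s t₀) x₀ s < wxx x₀ t₀ / 2 :=
          hd2'.eventually (gt_mem_nhds (by linarith))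
        rw [eventually_nhdsWithin_iff] at hev
        obtain ⟨ε, hε, hball⟩ := Metric.eventually_nhds_iff.mp hev
        set b := min (x₀ + ε / 2) ((x₀ + l) / 2) with hb
        have hx₀b : x₀ < b := lt_min (by linarith) (by linarith)
        have hbl : b < l := lt_of_le_of_lt (min_le_right _ _) (by linarith)
        have hwxneg : ∀ s ∈ Ioo x₀ b, wx s t₀ < 0 := by
          intro s hs
          have hsl : s ∈ Ioo x₀ l := ⟨hs.1, hs.2.trans hbl⟩
          have hdist : dist s x₀ < ε := by
            rw [Real.dist_eq, abs_of_pos (by linarith [hs.1] : (0:ℝ) < s - x₀)]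
            have : s < x₀ + ε / 2 := hs.2.trans_le (min_le_left _ _)
            linarith
          have hslope := hball hdist hsl
          rw [slope_def_field, hwx0] at hslope
          have hden : 0 < s - x₀ := by linarith [hs.1]
          have := (div_lt_iff₀ hden).mp hslope
          nlinarith
        -- mean value theorem on [x₀, b]
        have hcont : ContinuousOn (fun s => w s t₀) (Icc x₀ b) := by
          intro s hs
          have hs' : s ∈ Icc (0:ℝ) l := ⟨h0.le.trans hs.1, hs.2.trans hbl.le⟩
          exact ((hwx s hs' t₀ ht₀T).continuousWithinAt).mono
            (Icc_subset_Icc (by linarith [hs'.1, h0] : (0:ℝ) ≤ x₀) hbl.le)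
        have hderiv : ∀ s ∈ Ioo x₀ b, HasDerivAt (fun s => w s t₀) (wx s t₀) s := by
          intro s hs
          have hs1 : 0 < s := h0.trans hs.1
          have hs2 : s < l := hs.2.trans hbl
          exact (hwx s ⟨hs1.le, hs2.le⟩ t₀ ht₀T).hasDerivAt
            (Icc_mem_nhds hs1 hs2)
        obtain ⟨c, hc', hceq⟩ := exists_hasDerivAt_eq_slope (fun s => w s t₀)
          (fun s => wx s t₀) hx₀b hcont hderiv
        have hcneg := hwxneg c hc'
        have hwb : w x₀ t₀ ≤ w b t₀ := hminx b ⟨h0.le.trans hx₀b.le, hbl.le⟩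
        have hpos : 0 ≤ (w b t₀ - w x₀ t₀) / (b - x₀) :=
          div_nonneg (by linarith) (by linarith)
        rw [hceq] at hcneg
        linarith
      rw [hwx0, mul_zero, add_zero]
      exact mul_nonneg (hapos x₀ ⟨h0, hlt⟩).le hwxx0
  have hLc := hLw x₀ hx₀ t₀ ht₀T
  have hqm : q x₀ * w x₀ t₀ < 0 :=
    mul_neg_of_pos_of_neg (lt_of_lt_of_le hq₀ (hq x₀ hx₀)) hneg
  linarith


/-- Preservation of nonnegativity and boundedness: if `φ ≥ 0` is bounded on `[0,l]` and the
admissible `u` solves `𝓛u = 0` on `[0,l] × (0,T]` with `u(·,0) = φ`, then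
`0 ≤ u ≤ sup_{[0,l]} φ` on `Q̄`. -/
theorem nonnegativity_and_bound
    (l T q₀ : ℝ) (hl : 0 < l) (hT : 0 < T) (hq₀ : 0 < q₀)
    (a a' q : ℝ → ℝ)
    (ha : ∀ x ∈ Icc (0:ℝ) l, HasDerivWithinAt a (a' x) (Icc (0:ℝ) l) x)
    (ha'c : ContinuousOn a' (Icc (0:ℝ) l))
    (ha0 : a 0 = 0) (hal : a l = 0)
    (hapos : ∀ x ∈ Ioo (0:ℝ) l, 0 < a x)
    (hqc : ContinuousOn q (Icc (0:ℝ) l))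
    (hq : ∀ x ∈ Icc (0:ℝ) l, q₀ ≤ q x)
    (u ut ux uxx : ℝ → ℝ → ℝ)
    (hu : ContinuousOn (fun p : ℝ × ℝ => u p.1 p.2) (Icc (0:ℝ) l ×ˢ Icc (0:ℝ) T))
    (hut : ∀ x ∈ Icc (0:ℝ) l, ∀ t ∈ Ioc (0:ℝ) T,
      HasDerivWithinAt (fun τ => u x τ) (ut x t) (Icc (0:ℝ) T) t)
    (hux : ∀ x ∈ Icc (0:ℝ) l, ∀ t ∈ Ioc (0:ℝ) T,
      HasDerivWithinAt (fun s => u s t) (ux x t) (Icc (0:ℝ) l) x)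
    (huxx : ∀ x ∈ Icc (0:ℝ) l, ∀ t ∈ Ioc (0:ℝ) T,
      HasDerivWithinAt (fun s => ux s t) (uxx x t) (Icc (0:ℝ) l) x)
    (φ : ℝ → ℝ)
    (hφb : ∃ M, ∀ x ∈ Icc (0:ℝ) l, |φ x| ≤ M)
    (hφn : ∀ x ∈ Icc (0:ℝ) l, 0 ≤ φ x)
    (hL : ∀ x ∈ Icc (0:ℝ) l, ∀ t ∈ Ioc (0:ℝ) T,
      ut x t - (a x * uxx x t + a' x * ux x t) + q x * u x t = 0)
    (hinit : ∀ x ∈ Icc (0:ℝ) l, u x 0 = φ x) :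
    ∀ x ∈ Icc (0:ℝ) l, ∀ t ∈ Icc (0:ℝ) T,
      0 ≤ u x t ∧ u x t ≤ sSup (φ '' Icc (0:ℝ) l) := by
  intro x hx t ht
  obtain ⟨M₀, hM₀⟩ := hφb
  have hbdd : BddAbove (φ '' Icc (0:ℝ) l) := by
    refine ⟨M₀, fun y hy => ?_⟩
    obtain ⟨z, hz, rfl⟩ := hy
    exact (abs_le.mp (hM₀ z hz)).2
  set M := sSup (φ '' Icc (0:ℝ) l) with hM
  have hMφ : ∀ y ∈ Icc (0:ℝ) l, φ y ≤ M :=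
    fun y hy => le_csSup hbdd (mem_image_of_mem φ hy)
  have h0l : (0:ℝ) ∈ Icc (0:ℝ) l := ⟨le_rfl, hl.le⟩
  have hM0 : 0 ≤ M := (hφn 0 h0l).trans (hMφ 0 h0l)
  constructor
  · exact nonneg_of_supersol l T q₀ hl hT hq₀ a a' q ha ha0 hal hapos hq u ut ux uxx hu hut hux
      huxx (fun x hx t ht => (hL x hx t ht).ge)
      (fun x hx => by rw [hinit x hx]; exact hφn x hx) x hx t ht
  · have key := nonneg_of_supersol l T q₀ hl hT hq₀ a a' q ha ha0 hal hapos hq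
      (fun x t => M - u x t) (fun x t => -ut x t) (fun x t => -ux x t) (fun x t => -uxx x t)
      (continuousOn_const.sub hu)
      (fun x hx t ht => (hut x hx t ht).const_sub M)
      (fun x hx t ht => (hux x hx t ht).const_sub M)
      (fun x hx t ht => (huxx x hx t ht).neg)
      (fun x hx t ht => by
        show 0 ≤ -ut x t - (a x * -uxx x t + a' x * -ux x t) + q x * (M - u x t)
        have h1 := hL x hx t ht
        have h3 : 0 ≤ q x * M := mul_nonneg (hq₀.le.trans (hq x hx)) hM0
        have h2 : -ut x t - (a x * -uxx x t + a' x * -ux x t) + q x * (M - u x t) =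
            -(ut x t - (a x * uxx x t + a' x * ux x t) + q x * u x t) + q x * M := by ring
        rw [h2, h1]
        simpa using h3)
      (fun x hx => by
        show 0 ≤ M - u x 0
        rw [hinit x hx]
        exact sub_nonneg.mpr (hMφ x hx))
      x hx t ht
    have key' : 0 ≤ M - u x t := key
    linarith
end

section
/- Backward sup-norm estimate (Lemma 5.3, classical form): Let ψ : [0,l] → ℝ be bounded, and let v be a function continuous on Q̄ whose partial derivatives v_t, v_x, v_{xx} exist at every point of [0,l] × [0,T) (one-sided at boundary points), satisfying the backward equation −v_t − (a(x)v_x)_x + q(x)v = 0 for every (x,t) ∈ [0,l] × [0,T) and the terminal condition v(x,T) = ψ(x) for every x ∈ [0,l]. Then max_{(x,t) ∈ Q̄} |v(x,t)| ≤ sup_{x ∈ [0,l]} |ψ(x)|. -/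
open Set Filter Topology

private lemma slope_right_aux {f : ℝ → ℝ} {d A B x₀ : ℝ}
    (hf : HasDerivWithinAt f d (Icc A B) x₀) (hA : A ≤ x₀) (hB : x₀ < B)
    (hd : 0 < d) : ∃ y ∈ Icc A B, f x₀ < f y := by
  have h1 : ∀ᶠ y in 𝓝[Icc A B \ {x₀}] x₀, 0 < slope f x₀ y :=
    (hasDerivWithinAt_iff_tendsto_slope.1 hf).eventually (eventually_gt_nhds hd)
  have hsub : Ioo x₀ B ⊆ Icc A B \ {x₀} := fun y hy =>
    ⟨⟨hA.trans hy.1.le, hy.2.le⟩, (ne_of_gt hy.1)⟩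
  haveI := left_nhdsWithin_Ioo_neBot hB
  have h2 : ∀ᶠ y in 𝓝[Ioo x₀ B] x₀, 0 < slope f x₀ y :=
    Filter.Eventually.filter_mono (nhdsWithin_mono _ hsub) h1
  obtain ⟨y, hy, hmem⟩ := (h2.and eventually_mem_nhdsWithin).exists
  refine ⟨y, ⟨hA.trans hmem.1.le, hmem.2.le⟩, ?_⟩
  rw [slope_def_field] at hy
  have hyx : 0 < y - x₀ := sub_pos.2 hmem.1
  rcases div_pos_iff.1 hy with ⟨h, _⟩ | ⟨_, h⟩
  · linarith
  · linarith

private lemma slope_left_aux {f : ℝ → ℝ} {d A B x₀ : ℝ}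
    (hf : HasDerivWithinAt f d (Icc A B) x₀) (hA : A < x₀) (hB : x₀ ≤ B)
    (hd : d < 0) : ∃ y ∈ Icc A B, f x₀ < f y := by
  have h1 : ∀ᶠ y in 𝓝[Icc A B \ {x₀}] x₀, slope f x₀ y < 0 :=
    (hasDerivWithinAt_iff_tendsto_slope.1 hf).eventually (eventually_lt_nhds hd)
  have hsub : Ioo A x₀ ⊆ Icc A B \ {x₀} := fun y hy =>
    ⟨⟨hy.1.le, hy.2.le.trans hB⟩, (ne_of_lt hy.2)⟩
  haveI := right_nhdsWithin_Ioo_neBot hA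
  have h2 : ∀ᶠ y in 𝓝[Ioo A x₀] x₀, slope f x₀ y < 0 :=
    Filter.Eventually.filter_mono (nhdsWithin_mono _ hsub) h1
  obtain ⟨y, hy, hmem⟩ := (h2.and eventually_mem_nhdsWithin).exists
  refine ⟨y, ⟨hmem.1.le, hmem.2.le.trans hB⟩, ?_⟩
  rw [slope_def_field] at hy
  have hyx : y - x₀ < 0 := sub_neg.2 hmem.2
  rcases div_neg_iff.1 hy with ⟨h, h'⟩ | ⟨h, _⟩
  · linarith
  · linarith

private lemma deriv_nonpos_max_right {f : ℝ → ℝ} {d A B x₀ : ℝ}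
    (hf : HasDerivWithinAt f d (Icc A B) x₀) (hA : A ≤ x₀) (hB : x₀ < B)
    (hmax : ∀ y ∈ Icc A B, f y ≤ f x₀) : d ≤ 0 := by
  by_contra h
  push_neg at h
  obtain ⟨y, hy, hlt⟩ := slope_right_aux hf hA hB h
  exact absurd (hmax y hy) (not_le.2 hlt)

private lemma deriv_nonneg_max_left {f : ℝ → ℝ} {d A B x₀ : ℝ}
    (hf : HasDerivWithinAt f d (Icc A B) x₀) (hA : A < x₀) (hB : x₀ ≤ B)
    (hmax : ∀ y ∈ Icc A B, f y ≤ f x₀) : 0 ≤ d := by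
  by_contra h
  push_neg at h
  obtain ⟨y, hy, hlt⟩ := slope_left_aux hf hA hB h
  exact absurd (hmax y hy) (not_le.2 hlt)

private lemma snd_deriv_nonpos_max {f f' : ℝ → ℝ} {d A B x₀ : ℝ}
    (hA : A < x₀) (hB : x₀ < B)
    (hf : ∀ x ∈ Icc A B, HasDerivWithinAt f (f' x) (Icc A B) x)
    (hf' : HasDerivWithinAt f' d (Icc A B) x₀)
    (hmax : ∀ y ∈ Icc A B, f y ≤ f x₀) : d ≤ 0 := by
  by_contra hd
  push_neg at hd
  have hx₀ : x₀ ∈ Icc A B := ⟨hA.le, hB.le⟩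
  have h0 : f' x₀ = 0 :=
    le_antisymm (deriv_nonpos_max_right (hf x₀ hx₀) hA.le hB hmax)
      (deriv_nonneg_max_left (hf x₀ hx₀) hA hB.le hmax)
  have h1 : ∀ᶠ y in 𝓝[Icc A B \ {x₀}] x₀, 0 < slope f' x₀ y :=
    (hasDerivWithinAt_iff_tendsto_slope.1 hf').eventually (eventually_gt_nhds hd)
  rw [eventually_nhdsWithin_iff, Metric.eventually_nhds_iff] at h1
  obtain ⟨ε, hε, hball⟩ := h1
  set A' := max A (x₀ - ε / 2) with hA'def
  have hA' : A' < x₀ := max_lt hA (by linarith)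
  obtain ⟨x', hx'1, hx'2⟩ := exists_between hA'
  have hx'A : A < x' := lt_of_le_of_lt (le_max_left _ _) hx'1
  have hx'sub : Icc x' x₀ ⊆ Icc A B := Icc_subset_Icc hx'A.le hB.le
  have hcontAB : ContinuousOn f (Icc A B) := fun x hx => (hf x hx).continuousWithinAt
  have hcont : ContinuousOn f (Icc x' x₀) := hcontAB.mono hx'sub
  have hderiv : ∀ x ∈ Ioo x' x₀, HasDerivAt f (f' x) x := by
    intro x hx
    have hxm : x ∈ Icc A B := ⟨(hx'A.trans hx.1).le, (hx.2.trans hB).le⟩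
    exact (hf x hxm).hasDerivAt (Icc_mem_nhds (hx'A.trans hx.1) (hx.2.trans hB))
  obtain ⟨c, hc, hceq⟩ := exists_hasDerivAt_eq_slope f f' hx'2 hcont hderiv
  have hcA : A < c := hx'A.trans hc.1
  have hcB : c < B := hc.2.trans hB
  have hcmem : c ∈ Icc A B \ {x₀} := ⟨⟨hcA.le, hcB.le⟩, ne_of_lt hc.2⟩
  have hcdist : dist c x₀ < ε := by
    rw [Real.dist_eq, abs_lt]
    have : x₀ - ε / 2 ≤ A' := le_max_right _ _
    constructor <;> nlinarith [hc.1, hc.2, hx'1]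
  have hslope := hball hcdist hcmem
  rw [slope_def_field, h0] at hslope
  have hcx : c - x₀ < 0 := sub_neg.2 hc.2
  have hfc_neg : f' c < 0 := by
    rcases div_pos_iff.1 hslope with ⟨_, h⟩ | ⟨h, _⟩
    · linarith
    · linarith
  have hfc_nonneg : 0 ≤ f' c := by
    rw [hceq]
    apply div_nonneg
    · have := hmax x' ⟨hx'A.le, (hx'2.trans hB).le⟩
      linarith
    · linarith [hx'2]
  linarith

private lemma upper_estimate
    (l T q₀ : ℝ) (hl : 0 < l) (hT : 0 < T) (hq₀ : 0 < q₀)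
    (a a' q : ℝ → ℝ)
    (ha : ∀ x ∈ Icc (0:ℝ) l, HasDerivWithinAt a (a' x) (Icc (0:ℝ) l) x)
    (ha0 : a 0 = 0) (hal : a l = 0)
    (hapos : ∀ x ∈ Ioo (0:ℝ) l, 0 < a x)
    (hq : ∀ x ∈ Icc (0:ℝ) l, q₀ ≤ q x)
    (v vt vx vxx : ℝ → ℝ → ℝ)
    (hv : ContinuousOn (fun p : ℝ × ℝ => v p.1 p.2) (Icc (0:ℝ) l ×ˢ Icc (0:ℝ) T))
    (hvt : ∀ x ∈ Icc (0:ℝ) l, ∀ t ∈ Ico (0:ℝ) T,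
      HasDerivWithinAt (fun τ => v x τ) (vt x t) (Icc (0:ℝ) T) t)
    (hvx : ∀ x ∈ Icc (0:ℝ) l, ∀ t ∈ Ico (0:ℝ) T,
      HasDerivWithinAt (fun s => v s t) (vx x t) (Icc (0:ℝ) l) x)
    (hvxx : ∀ x ∈ Icc (0:ℝ) l, ∀ t ∈ Ico (0:ℝ) T,
      HasDerivWithinAt (fun s => vx s t) (vxx x t) (Icc (0:ℝ) l) x)
    (hL : ∀ x ∈ Icc (0:ℝ) l, ∀ t ∈ Ico (0:ℝ) T,
      -vt x t - (a x * vxx x t + a' x * vx x t) + q x * v x t = 0)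
    (M : ℝ) (hM0 : 0 ≤ M)
    (hfinalM : ∀ x ∈ Icc (0:ℝ) l, v x T ≤ M) :
    ∀ x ∈ Icc (0:ℝ) l, ∀ t ∈ Icc (0:ℝ) T, v x t ≤ M := by
  have hanonneg : ∀ y ∈ Icc (0:ℝ) l, 0 ≤ a y := by
    intro y hy
    rcases eq_or_lt_of_le hy.1 with h0 | h0
    · rw [← h0, ha0]
    rcases eq_or_lt_of_le hy.2 with h1 | h1
    · rw [h1, hal]
    · exact (hapos y ⟨h0, h1⟩).le
  have hK : IsCompact (Icc (0:ℝ) l ×ˢ Icc (0:ℝ) T) := isCompact_Icc.prod isCompact_Icc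
  have hKne : (Icc (0:ℝ) l ×ˢ Icc (0:ℝ) T).Nonempty :=
    ⟨(0, 0), ⟨⟨le_refl 0, hl.le⟩, ⟨le_refl 0, hT.le⟩⟩⟩
  obtain ⟨⟨x₀, t₀⟩, hp₀, hmax⟩ := hK.exists_isMaxOn hKne hv
  have hmax' : ∀ y ∈ Icc (0:ℝ) l, ∀ τ ∈ Icc (0:ℝ) T, v y τ ≤ v x₀ t₀ := by
    intro y hy τ hτ
    exact hmax (⟨hy, hτ⟩ : (y, τ) ∈ Icc (0:ℝ) l ×ˢ Icc (0:ℝ) T)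
  intro x hx t ht
  have key : v x₀ t₀ ≤ M := by
    by_contra hgt
    push_neg at hgt
    have hx₀ : x₀ ∈ Icc (0:ℝ) l := hp₀.1
    have ht₀ : t₀ ∈ Icc (0:ℝ) T := hp₀.2
    have htT : t₀ ≠ T := by
      intro h
      rw [h] at hgt
      exact absurd (hfinalM x₀ hx₀) (not_le.2 hgt)
    have ht₀' : t₀ ∈ Ico (0:ℝ) T := ⟨ht₀.1, lt_of_le_of_ne ht₀.2 htT⟩
    have hvtle : vt x₀ t₀ ≤ 0 :=
      deriv_nonpos_max_right (hvt x₀ hx₀ t₀ ht₀') ht₀.1 ht₀'.2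
        (fun τ hτ => hmax' x₀ hx₀ τ hτ)
    have hmaxx : ∀ y ∈ Icc (0:ℝ) l, v y t₀ ≤ v x₀ t₀ := fun y hy => hmax' y hy t₀ ht₀
    have hell : a x₀ * vxx x₀ t₀ + a' x₀ * vx x₀ t₀ ≤ 0 := by
      rcases eq_or_lt_of_le hx₀.1 with h0 | h0
      · -- x₀ = 0
        have hx0 : x₀ = 0 := h0.symm
        have hvx0 : vx x₀ t₀ ≤ 0 :=
          deriv_nonpos_max_right (hvx x₀ hx₀ t₀ ht₀') hx₀.1 (by rw [hx0]; exact hl) hmaxx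
        have ha'0 : 0 ≤ a' x₀ := by
          have hneg : HasDerivWithinAt (fun s => -a s) (-a' x₀) (Icc (0:ℝ) l) x₀ :=
            (ha x₀ hx₀).neg
          have := deriv_nonpos_max_right hneg hx₀.1 (by rw [hx0]; exact hl)
            (fun y hy => by
              simp only [neg_le_neg_iff]
              rw [hx0, ha0]
              exact hanonneg y hy)
          linarith
        have ha0' : a x₀ = 0 := by rw [hx0, ha0]
        rw [ha0']
        nlinarith
      rcases eq_or_lt_of_le hx₀.2 with h1 | h1
      · -- x₀ = l
        have hvx0 : 0 ≤ vx x₀ t₀ :=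
          deriv_nonneg_max_left (hvx x₀ hx₀ t₀ ht₀') (by rw [h1]; exact hl) hx₀.2 hmaxx
        have ha'0 : a' x₀ ≤ 0 := by
          have hneg : HasDerivWithinAt (fun s => -a s) (-a' x₀) (Icc (0:ℝ) l) x₀ :=
            (ha x₀ hx₀).neg
          have := deriv_nonneg_max_left hneg (by rw [h1]; exact hl) hx₀.2
            (fun y hy => by
              simp only [neg_le_neg_iff]
              rw [h1, hal]
              exact hanonneg y hy)
          linarith
        have ha0' : a x₀ = 0 := by rw [h1, hal]
        rw [ha0']
        nlinarith
      · -- interior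
        have hvx0 : vx x₀ t₀ = 0 :=
          le_antisymm (deriv_nonpos_max_right (hvx x₀ hx₀ t₀ ht₀') hx₀.1 h1 hmaxx)
            (deriv_nonneg_max_left (hvx x₀ hx₀ t₀ ht₀') h0 hx₀.2 hmaxx)
        have hvxx0 : vxx x₀ t₀ ≤ 0 :=
          snd_deriv_nonpos_max h0 h1
            (fun y hy => hvx y hy t₀ ht₀') (hvxx x₀ hx₀ t₀ ht₀') hmaxx
        have hax : 0 < a x₀ := hapos x₀ ⟨h0, h1⟩
        rw [hvx0]
        nlinarith
    have heq := hL x₀ hx₀ t₀ ht₀'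
    have hv0 : 0 < v x₀ t₀ := lt_of_le_of_lt hM0 hgt
    have hqv : q₀ * v x₀ t₀ ≤ q x₀ * v x₀ t₀ :=
      mul_le_mul_of_nonneg_right (hq x₀ hx₀) hv0.le
    nlinarith
  exact le_trans (hmax' x hx t ht) key

/-- Backward sup-norm estimate (Lemma 5.3, classical form): a classical solution `v` of the
backward equation `−v_t − (a v_x)_x + q v = 0` on `[0,l] × [0,T)` with terminal value
`v(·,T) = ψ` satisfies `max_{Q̄} |v| ≤ sup_{[0,l]} |ψ|`. -/
theorem backward_sup_norm_estimate
    (l T q₀ : ℝ) (hl : 0 < l) (hT : 0 < T) (hq₀ : 0 < q₀)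
    (a a' q : ℝ → ℝ)
    (ha : ∀ x ∈ Icc (0:ℝ) l, HasDerivWithinAt a (a' x) (Icc (0:ℝ) l) x)
    (ha'c : ContinuousOn a' (Icc (0:ℝ) l))
    (ha0 : a 0 = 0) (hal : a l = 0)
    (hapos : ∀ x ∈ Ioo (0:ℝ) l, 0 < a x)
    (hqc : ContinuousOn q (Icc (0:ℝ) l))
    (hq : ∀ x ∈ Icc (0:ℝ) l, q₀ ≤ q x)
    (ψ : ℝ → ℝ)
    (hψb : ∃ M, ∀ x ∈ Icc (0:ℝ) l, |ψ x| ≤ M)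
    (v vt vx vxx : ℝ → ℝ → ℝ)
    (hv : ContinuousOn (fun p : ℝ × ℝ => v p.1 p.2) (Icc (0:ℝ) l ×ˢ Icc (0:ℝ) T))
    (hvt : ∀ x ∈ Icc (0:ℝ) l, ∀ t ∈ Ico (0:ℝ) T,
      HasDerivWithinAt (fun τ => v x τ) (vt x t) (Icc (0:ℝ) T) t)
    (hvx : ∀ x ∈ Icc (0:ℝ) l, ∀ t ∈ Ico (0:ℝ) T,
      HasDerivWithinAt (fun s => v s t) (vx x t) (Icc (0:ℝ) l) x)
    (hvxx : ∀ x ∈ Icc (0:ℝ) l, ∀ t ∈ Ico (0:ℝ) T,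
      HasDerivWithinAt (fun s => vx s t) (vxx x t) (Icc (0:ℝ) l) x)
    (hL : ∀ x ∈ Icc (0:ℝ) l, ∀ t ∈ Ico (0:ℝ) T,
      -vt x t - (a x * vxx x t + a' x * vx x t) + q x * v x t = 0)
    (hfinal : ∀ x ∈ Icc (0:ℝ) l, v x T = ψ x) :
    ∀ x ∈ Icc (0:ℝ) l, ∀ t ∈ Icc (0:ℝ) T,
      |v x t| ≤ sSup ((fun x => |ψ x|) '' Icc (0:ℝ) l) := by
  set M := sSup ((fun x => |ψ x|) '' Icc (0:ℝ) l) with hMdef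
  obtain ⟨C, hC⟩ := hψb
  have hbdd : BddAbove ((fun x => |ψ x|) '' Icc (0:ℝ) l) := by
    refine ⟨C, fun y hy => ?_⟩
    obtain ⟨x, hx, rfl⟩ := hy
    exact hC x hx
  have hub : ∀ x ∈ Icc (0:ℝ) l, |ψ x| ≤ M := fun x hx =>
    le_csSup hbdd (mem_image_of_mem _ hx)
  have h0mem : (0:ℝ) ∈ Icc (0:ℝ) l := ⟨le_refl 0, hl.le⟩
  have hM0 : 0 ≤ M := le_trans (abs_nonneg _) (hub 0 h0mem)
  have hupper : ∀ x ∈ Icc (0:ℝ) l, ∀ t ∈ Icc (0:ℝ) T, v x t ≤ M := by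
    apply upper_estimate l T q₀ hl hT hq₀ a a' q ha ha0 hal hapos hq v vt vx vxx hv
      hvt hvx hvxx hL M hM0
    intro x hx
    rw [hfinal x hx]
    exact le_trans (le_abs_self _) (hub x hx)
  have hlower : ∀ x ∈ Icc (0:ℝ) l, ∀ t ∈ Icc (0:ℝ) T, -(v x t) ≤ M := by
    apply upper_estimate l T q₀ hl hT hq₀ a a' q ha ha0 hal hapos hq
      (fun x t => -(v x t)) (fun x t => -(vt x t)) (fun x t => -(vx x t))
      (fun x t => -(vxx x t)) hv.neg
      (fun x hx t ht => (hvt x hx t ht).neg)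
      (fun x hx t ht => (hvx x hx t ht).neg)
      (fun x hx t ht => (hvxx x hx t ht).neg)
      (fun x hx t ht => by have := hL x hx t ht; ring_nf; ring_nf at this; linarith)
      M hM0
    intro x hx
    rw [hfinal x hx]
    exact le_trans (neg_le_abs _) (hub x hx)
  intro x hx t ht
  rw [abs_le]
  exact ⟨neg_le.1 (hlower x hx t ht), hupper x hx t ht⟩
end
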